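/- arXiv:0801.1923 — 12 statements merged into one kernel-verified Lean document; each statement's English description precedes it below -/
import Mathlib

section
/- Let I ⊆ ℝ be an open interval, let g, μ : I → ℝ be differentiable functions and let λ : I → ℝ be a continuous function such that g(t) > 0 and λ(t) ≠ μ(t) for all t ∈ I, the set {t ∈ I : g'(t) ≠ 0} is dense in I, and μ'(t) = 2(λ(t) − μ(t))·g'(t)/g(t) for all t ∈ I. Then the following conditions are equivalent: (a) there exists E ∈ ℝ such that λ(t) − μ(t) = E·g(t)² for all t ∈ I; (b) there exist C, D ∈ ℝ such that μ(t) = C·g(t)² + D for all t ∈ I; (c) the function λ − 2μ is constant on I. -/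
/-- Constancy from zero derivative on an open convex set. -/
lemma aux_const_of_hasDerivAt_zero {I : Set ℝ} (hIopen : IsOpen I) (hIconv : Convex ℝ I)
    {F : ℝ → ℝ} (hF : ∀ t ∈ I, HasDerivAt F 0 t) :
    ∀ x ∈ I, ∀ y ∈ I, F x = F y := by
  intro x hx y hy
  refine hIconv.is_const_of_fderivWithin_eq_zero
    (fun t ht => ((hF t ht).differentiableAt).differentiableWithinAt) (fun t ht => ?_) hx hy
  have h1 : HasFDerivAt F (ContinuousLinearMap.smulRight (1 : ℝ →L[ℝ] ℝ) (0:ℝ)) t :=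
    (hF t ht).hasFDerivAt
  have h2 : (ContinuousLinearMap.smulRight (1 : ℝ →L[ℝ] ℝ) (0:ℝ)) = 0 := by
    ext; simp
  rw [h2] at h1
  exact (h1.hasFDerivWithinAt).fderivWithin (hIopen.uniqueDiffOn t ht)

/-- Proposition 6 (analytic content): on an open interval where `g > 0`,
`l ≠ m`, `g' ≠ 0` on a dense subset and `m' = 2(l - m) g'/g`, the
conditions (a) `l - m = E g²`, (b) `m = C g² + D`, (c) `l - 2m` constant
are equivalent. -/
theorem stmt_0 (I : Set ℝ) (hIopen : IsOpen I) (hIconn : I.OrdConnected)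
    (g m l : ℝ → ℝ)
    (hg : ∀ t ∈ I, DifferentiableAt ℝ g t)
    (hm : ∀ t ∈ I, DifferentiableAt ℝ m t)
    (hl : ContinuousOn l I)
    (hgpos : ∀ t ∈ I, 0 < g t)
    (hne : ∀ t ∈ I, l t ≠ m t)
    (hdense : I ⊆ closure {t ∈ I | deriv g t ≠ 0})
    (hode : ∀ t ∈ I, deriv m t = 2 * (l t - m t) * deriv g t / g t) :
    ((∃ E : ℝ, ∀ t ∈ I, l t - m t = E * g t ^ 2) ↔
      (∃ C D : ℝ, ∀ t ∈ I, m t = C * g t ^ 2 + D)) ∧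
    ((∃ C D : ℝ, ∀ t ∈ I, m t = C * g t ^ 2 + D) ↔
      (∃ k : ℝ, ∀ t ∈ I, l t - 2 * m t = k)) := by
  have hIconv : Convex ℝ I := hIconn.convex
  have hmC : ContinuousOn m I := fun t ht => (hm t ht).continuousAt.continuousWithinAt
  have hgC : ContinuousOn g I := fun t ht => (hg t ht).continuousAt.continuousWithinAt
  -- (a) → (b)
  have hab : (∃ E : ℝ, ∀ t ∈ I, l t - m t = E * g t ^ 2) →
      ∃ C D : ℝ, ∀ t ∈ I, m t = C * g t ^ 2 + D := by
    rintro ⟨E, ha⟩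
    rcases Set.eq_empty_or_nonempty I with hIe | ⟨t0, ht0⟩
    · exact ⟨E, 0, fun t ht => by simp [hIe] at ht⟩
    have hF : ∀ t ∈ I, HasDerivAt (fun s => m s - E * g s ^ 2) 0 t := by
      intro t ht
      have h1 : HasDerivAt m (deriv m t) t := (hm t ht).hasDerivAt
      have h2 : HasDerivAt (fun s => E * g s ^ 2)
          (E * ((2 : ℕ) * g t ^ (2 - 1) * deriv g t)) t :=
        (((hg t ht).hasDerivAt).pow 2).const_mul E
      have h3 := h1.sub h2
      refine h3.congr_deriv ?_
      have hgne := (hgpos t ht).ne'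
      rw [hode t ht, ha t ht]
      field_simp
      ring
    refine ⟨E, m t0 - E * g t0 ^ 2, fun t ht => ?_⟩
    have := aux_const_of_hasDerivAt_zero hIopen hIconv hF t ht t0 ht0
    linarith [this]
  -- from (b), derive `l - m = C g²` on I with the same C (density argument)
  have hba : ∀ C D : ℝ, (∀ t ∈ I, m t = C * g t ^ 2 + D) →
      ∀ t ∈ I, l t - m t = C * g t ^ 2 := by
    intro C D hb
    have hdm : ∀ t ∈ I, deriv m t = C * ((2 : ℕ) * g t ^ (2 - 1) * deriv g t) := by
      intro t ht
      have heq : m =ᶠ[nhds t] fun s => C * g s ^ 2 + D :=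
        Filter.eventuallyEq_of_mem (hIopen.mem_nhds ht) hb
      rw [heq.deriv_eq]
      exact ((((hg t ht).hasDerivAt).pow 2).const_mul C).add_const D |>.deriv
    -- on the dense set
    have hS : ∀ t ∈ {t ∈ I | deriv g t ≠ 0}, l t - m t - C * g t ^ 2 = 0 := by
      rintro t ⟨ht, hgt⟩
      have h1 := hode t ht
      rw [hdm t ht] at h1
      have hgne := (hgpos t ht).ne'
      field_simp at h1
      rcases mul_eq_mul_right_iff.mp (by norm_num at h1; linear_combination (-(deriv g t) / 2) * h1 : (l t - m t) * deriv g t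
          = (C * g t ^ 2) * deriv g t) with h | h
      · linarith
      · exact absurd h hgt
    intro t ht
    set h : ℝ → ℝ := fun s => l s - m s - C * g s ^ 2 with hh
    have hcont : ContinuousOn h I :=
      (hl.sub hmC).sub ((continuousOn_const.mul (hgC.pow 2)))
    have hcw : ContinuousWithinAt h {t ∈ I | deriv g t ≠ 0} t :=
      (hcont t ht).mono (fun s hs => hs.1)
    have hmem : h t ∈ closure (h '' {t ∈ I | deriv g t ≠ 0}) :=
      hcw.mem_closure_image (hdense ht)
    have himg : h '' {t ∈ I | deriv g t ≠ 0} ⊆ {0} := by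
      rintro x ⟨s, hs, rfl⟩; exact hS s hs
    have : h t ∈ closure ({0} : Set ℝ) := closure_mono himg hmem
    rw [closure_singleton] at this
    have ht0 : h t = 0 := this
    simp only [hh] at ht0
    linarith
  -- (b) → (c)
  have hbc : (∃ C D : ℝ, ∀ t ∈ I, m t = C * g t ^ 2 + D) →
      ∃ k : ℝ, ∀ t ∈ I, l t - 2 * m t = k := by
    rintro ⟨C, D, hb⟩
    refine ⟨-D, fun t ht => ?_⟩
    have h1 := hba C D hb t ht
    have h2 := hb t ht
    linarith
  -- (c) → (b)
  have hcb : (∃ k : ℝ, ∀ t ∈ I, l t - 2 * m t = k) →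
      ∃ C D : ℝ, ∀ t ∈ I, m t = C * g t ^ 2 + D := by
    rintro ⟨k, hc⟩
    rcases Set.eq_empty_or_nonempty I with hIe | ⟨t0, ht0⟩
    · exact ⟨0, 0, fun t ht => by simp [hIe] at ht⟩
    have hG : ∀ t ∈ I, HasDerivAt (fun s => (m s + k) / g s ^ 2) 0 t := by
      intro t ht
      have hgne := (hgpos t ht).ne'
      have h1 : HasDerivAt (fun s => m s + k) (deriv m t) t :=
        ((hm t ht).hasDerivAt).add_const k
      have h2 : HasDerivAt (fun s => g s ^ 2) ((2 : ℕ) * g t ^ (2 - 1) * deriv g t) t :=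
        ((hg t ht).hasDerivAt).pow 2
      have h3 := h1.div h2 (pow_ne_zero 2 hgne)
      refine h3.congr_deriv ?_
      have hlm : l t - m t = m t + k := by have := hc t ht; linarith
      rw [hode t ht, hlm]
      field_simp
      ring
    set C := (m t0 + k) / g t0 ^ 2 with hC
    refine ⟨C, -k, fun t ht => ?_⟩
    have hconst := aux_const_of_hasDerivAt_zero hIopen hIconv hG t ht t0 ht0
    have hgne := (hgpos t ht).ne'
    have : (m t + k) / g t ^ 2 = C := hconst
    field_simp at this
    linarith
  exact ⟨⟨hab, fun ⟨C, D, hb⟩ => ⟨C, fun t ht => hba C D hb t ht⟩⟩, ⟨hbc, hcb⟩⟩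
end

section
/- Let I ⊆ ℝ be an open interval, let s ∈ ℝ, and let f, g : I → ℝ be twice differentiable functions with f(t) ≠ 0 and g(t) ≠ 0 for all t ∈ I. Suppose that f'(t)·g'(t)·g(t)³ − g''(t)·f(t)·g(t)³ = s²·f(t)³ for all t ∈ I. Then the function t ↦ g'(t)²/f(t)² − s²/g(t)² is constant on I; equivalently, there exists a constant A ∈ ℝ such that f(t)²·(s² + A·g(t)²) = g(t)²·g'(t)² for all t ∈ I. -/
/-- First integral underlying equation (3.3): if `f' g' g³ − g'' f g³ = s² f³`
on an open interval with `f, g` nonvanishing, then `g'²/f² − s²/g²` is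
constant; equivalently `f² (s² + A g²) = g² g'²` for some constant `A`. -/
theorem stmt_1 (I : Set ℝ) (hIopen : IsOpen I) (hIconn : I.OrdConnected)
    (s : ℝ) (f g : ℝ → ℝ)
    (hf : ∀ t ∈ I, DifferentiableAt ℝ f t)
    (hg : ∀ t ∈ I, DifferentiableAt ℝ g t)
    (hg' : ∀ t ∈ I, DifferentiableAt ℝ (deriv g) t)
    (hfne : ∀ t ∈ I, f t ≠ 0)
    (hgne : ∀ t ∈ I, g t ≠ 0)
    (heq : ∀ t ∈ I, deriv f t * deriv g t * g t ^ 3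
        - deriv (deriv g) t * f t * g t ^ 3 = s ^ 2 * f t ^ 3) :
    (∃ c : ℝ, ∀ t ∈ I,
        (deriv g t) ^ 2 / f t ^ 2 - s ^ 2 / g t ^ 2 = c) ∧
    (∃ A : ℝ, ∀ t ∈ I,
        f t ^ 2 * (s ^ 2 + A * g t ^ 2) = g t ^ 2 * (deriv g t) ^ 2) := by
  set h : ℝ → ℝ := fun t => (deriv g t) ^ 2 / f t ^ 2 - s ^ 2 / g t ^ 2 with hh
  have hderiv : ∀ t ∈ I, HasDerivAt h 0 t := by
    intro t ht
    have h1 : HasDerivAt (fun x => (deriv g x) ^ 2)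
        (2 * deriv g t * deriv (deriv g) t) t := by
      have := ((hg' t ht).hasDerivAt).fun_pow 2
      simpa [mul_comm, mul_assoc, mul_left_comm] using this
    have h2 : HasDerivAt (fun x => f x ^ 2) (2 * f t * deriv f t) t := by
      have := ((hf t ht).hasDerivAt).fun_pow 2
      simpa [mul_comm, mul_assoc, mul_left_comm] using this
    have h3 : HasDerivAt (fun x => g x ^ 2) (2 * g t * deriv g t) t := by
      have := ((hg t ht).hasDerivAt).fun_pow 2
      simpa [mul_comm, mul_assoc, mul_left_comm] using this
    have hf2 : f t ^ 2 ≠ 0 := pow_ne_zero _ (hfne t ht)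
    have hg2 : g t ^ 2 ≠ 0 := pow_ne_zero _ (hgne t ht)
    have hd1 := h1.div h2 hf2
    have hd2 := (hasDerivAt_const t (s ^ 2)).div h3 hg2
    have hsum := hd1.sub hd2
    have key : (2 * deriv g t * deriv (deriv g) t * f t ^ 2 -
          deriv g t ^ 2 * (2 * f t * deriv f t)) / (f t ^ 2) ^ 2 -
        (0 * g t ^ 2 - s ^ 2 * (2 * g t * deriv g t)) / (g t ^ 2) ^ 2 = 0 := by
      have e := heq t ht
      have hfne' := hfne t ht
      have hgne' := hgne t ht
      field_simp
      linear_combination (-2 * deriv g t) * e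
    rw [key] at hsum
    exact hsum
  have hconv : Convex ℝ I := convex_iff_ordConnected.mpr hIconn
  have hconst : ∀ x ∈ I, ∀ y ∈ I, h x = h y := by
    intro x hx y hy
    apply hconv.is_const_of_fderivWithin_eq_zero
      (fun z hz => ((hderiv z hz).differentiableAt).differentiableWithinAt)
      (fun z hz => ?_) hx hy
    rw [fderivWithin_eq_fderiv (hIopen.uniqueDiffWithinAt hz)
      ((hderiv z hz).differentiableAt)]
    rw [HasFDerivAt.fderiv (hderiv z hz)]
    ext
    simp
  rcases Set.eq_empty_or_nonempty I with hI | ⟨t₀, ht₀⟩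
  · refine ⟨⟨0, by simp [hI]⟩, ⟨0, by simp [hI]⟩⟩
  · refine ⟨⟨h t₀, fun t ht => hconst t ht t₀ ht₀⟩,
      ⟨h t₀, fun t ht => ?_⟩⟩
    have hc := hconst t ht t₀ ht₀
    have hfne' := hfne t ht
    have hgne' := hgne t ht
    have : (deriv g t) ^ 2 / f t ^ 2 - s ^ 2 / g t ^ 2 = h t₀ := hc
    field_simp at this
    nlinarith [this]
end

section
/- Let I ⊆ ℝ be an open interval, let s, A ∈ ℝ, and let g : I → ℝ be a twice differentiable function with s² + A·g(t)² > 0 for all t ∈ I. Define f : I → ℝ by f(t) = g(t)·g'(t)/√(s² + A·g(t)²). Then f is differentiable on I and f'(t)·g'(t)·g(t)³ − g''(t)·f(t)·g(t)³ = s²·f(t)³ for all t ∈ I. -/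
/-- Converse direction of equation (3.3): the ansatz `f = g g'/√(s² + A g²)`
solves `f' g' g³ − g'' f g³ = s² f³`. -/
theorem stmt_2 (I : Set ℝ) (hIopen : IsOpen I) (hIconn : I.OrdConnected)
    (s A : ℝ) (g f : ℝ → ℝ)
    (hg : ∀ t ∈ I, DifferentiableAt ℝ g t)
    (hg' : ∀ t ∈ I, DifferentiableAt ℝ (deriv g) t)
    (hpos : ∀ t ∈ I, 0 < s ^ 2 + A * g t ^ 2)
    (hf : ∀ t, f t = g t * deriv g t / Real.sqrt (s ^ 2 + A * g t ^ 2)) :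
    (∀ t ∈ I, DifferentiableAt ℝ f t) ∧
    (∀ t ∈ I, deriv f t * deriv g t * g t ^ 3
        - deriv (deriv g) t * f t * g t ^ 3 = s ^ 2 * f t ^ 3) := by
  have hfun : f = fun t => g t * deriv g t / Real.sqrt (s ^ 2 + A * g t ^ 2) := funext hf
  have key : ∀ t ∈ I, HasDerivAt f
      (((deriv g t * deriv g t + g t * deriv (deriv g) t) * Real.sqrt (s ^ 2 + A * g t ^ 2)
        - g t * deriv g t * (A * (2 * g t * deriv g t) / (2 * Real.sqrt (s ^ 2 + A * g t ^ 2))))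
        / Real.sqrt (s ^ 2 + A * g t ^ 2) ^ 2) t := by
    intro t ht
    have hq := hpos t ht
    have hrpos : 0 < Real.sqrt (s ^ 2 + A * g t ^ 2) := Real.sqrt_pos.mpr hq
    have h1 : HasDerivAt g (deriv g t) t := (hg t ht).hasDerivAt
    have h2 : HasDerivAt (deriv g) (deriv (deriv g) t) t := (hg' t ht).hasDerivAt
    have hnum : HasDerivAt (fun t => g t * deriv g t)
        (deriv g t * deriv g t + g t * deriv (deriv g) t) t := h1.mul h2
    have hqd : HasDerivAt (fun t => s ^ 2 + A * g t ^ 2) (A * (2 * g t * deriv g t)) t := by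
      have := ((h1.pow 2).const_mul A).const_add (s ^ 2)
      simpa [mul_comm, mul_assoc, mul_left_comm] using this
    have hsq : HasDerivAt (fun t => Real.sqrt (s ^ 2 + A * g t ^ 2))
        (A * (2 * g t * deriv g t) / (2 * Real.sqrt (s ^ 2 + A * g t ^ 2))) t :=
      hqd.sqrt hq.ne'
    rw [hfun]
    exact hnum.div hsq hrpos.ne'
  constructor
  · exact fun t ht => (key t ht).differentiableAt
  · intro t ht
    have hq := hpos t ht
    have hrpos : 0 < Real.sqrt (s ^ 2 + A * g t ^ 2) := Real.sqrt_pos.mpr hq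
    have hr2 : Real.sqrt (s ^ 2 + A * g t ^ 2) ^ 2 = s ^ 2 + A * g t ^ 2 :=
      Real.sq_sqrt hq.le
    rw [(key t ht).deriv, hf t]
    set r := Real.sqrt (s ^ 2 + A * g t ^ 2) with hrdef
    set u := g t
    set v := deriv g t
    set w := deriv (deriv g) t
    field_simp
    linear_combination (u ^ 3 * v ^ 3) * hr2
end

section
/- Let s > 0 and ε, C, D, E ∈ ℝ. Define z : ℝ → ℝ by z(h) = (1 − (h/s)²)⁻¹ · ( −4ε(h/s)² − (Ds⁴/5)(h/s)⁶ + (Ds⁴ − Cs²/3)(h/s)⁴ + (2Cs² − 3Ds⁴)(h/s)² − 4ε + Cs² − Ds⁴ + (E/s)(h/s) ). Then for every h ∈ ℝ with h ≠ 0 and h² ≠ s², the derivative of z satisfies z'(h) − z(h)·(s² + h²)/(h(s² − h²)) = 4ε/h + D(s² − h²)²/h − C(s² − h²)/h. -/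
/-- Formula (3.7) solves the linear first-order ODE (3.5). -/
theorem stmt_3 (s e C D E : ℝ) (hs : 0 < s) (z : ℝ → ℝ)
    (hz : z = fun h : ℝ =>
      (1 - (h / s) ^ 2)⁻¹ *
        (-4 * e * (h / s) ^ 2 - (D * s ^ 4 / 5) * (h / s) ^ 6
          + (D * s ^ 4 - C * s ^ 2 / 3) * (h / s) ^ 4
          + (2 * C * s ^ 2 - 3 * D * s ^ 4) * (h / s) ^ 2
          - 4 * e + C * s ^ 2 - D * s ^ 4 + (E / s) * (h / s))) :
    ∀ h : ℝ, h ≠ 0 → h ^ 2 ≠ s ^ 2 →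
      deriv z h - z h * (s ^ 2 + h ^ 2) / (h * (s ^ 2 - h ^ 2)) =
        4 * e / h + D * (s ^ 2 - h ^ 2) ^ 2 / h - C * (s ^ 2 - h ^ 2) / h := by
  intro h hh hhs
  have hs0 : s ≠ 0 := ne_of_gt hs
  have hu : (1 : ℝ) - (h / s) ^ 2 ≠ 0 := by
    have : (h / s) ^ 2 ≠ 1 := by
      rw [div_pow]
      intro hc
      apply hhs
      field_simp at hc
      exact hc
    intro hc
    apply this
    linarith [hc]
  have hq : HasDerivAt (fun x : ℝ => x / s) (1 / s) h := (hasDerivAt_id h).div_const s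
  have hP : HasDerivAt (fun x : ℝ =>
      -4 * e * (x / s) ^ 2 - (D * s ^ 4 / 5) * (x / s) ^ 6
        + (D * s ^ 4 - C * s ^ 2 / 3) * (x / s) ^ 4
        + (2 * C * s ^ 2 - 3 * D * s ^ 4) * (x / s) ^ 2
        - 4 * e + C * s ^ 2 - D * s ^ 4 + (E / s) * (x / s))
      (-4 * e * ((2 : ℕ) * (h / s) ^ 1 * (1 / s))
        - (D * s ^ 4 / 5) * ((6 : ℕ) * (h / s) ^ 5 * (1 / s))
        + (D * s ^ 4 - C * s ^ 2 / 3) * ((4 : ℕ) * (h / s) ^ 3 * (1 / s))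
        + (2 * C * s ^ 2 - 3 * D * s ^ 4) * ((2 : ℕ) * (h / s) ^ 1 * (1 / s))
        + (E / s) * (1 / s)) h := by
    exact ((((((((hq.pow 2).const_mul (-4 * e)).sub
      ((hq.pow 6).const_mul (D * s ^ 4 / 5))).add
      ((hq.pow 4).const_mul (D * s ^ 4 - C * s ^ 2 / 3))).add
      ((hq.pow 2).const_mul (2 * C * s ^ 2 - 3 * D * s ^ 4))).sub_const
      (4 * e)).add_const (C * s ^ 2)).sub_const (D * s ^ 4)).add
      (hq.const_mul (E / s))
  have hU : HasDerivAt (fun x : ℝ => (1 - (x / s) ^ 2)⁻¹)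
      (-(0 - (2 : ℕ) * (h / s) ^ 1 * (1 / s)) / (1 - (h / s) ^ 2) ^ 2) h :=
    ((hasDerivAt_const h (1 : ℝ)).sub (hq.pow 2)).inv hu
  have hZ : HasDerivAt (fun x : ℝ => (1 - (x / s) ^ 2)⁻¹ *
      (-4 * e * (x / s) ^ 2 - (D * s ^ 4 / 5) * (x / s) ^ 6
        + (D * s ^ 4 - C * s ^ 2 / 3) * (x / s) ^ 4
        + (2 * C * s ^ 2 - 3 * D * s ^ 4) * (x / s) ^ 2
        - 4 * e + C * s ^ 2 - D * s ^ 4 + (E / s) * (x / s))) _ h := hU.mul hP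
  rw [hz]
  rw [hZ.deriv]
  have hsh : s ^ 2 - h ^ 2 ≠ 0 := fun hc => hhs (by linarith)
  field_simp
  ring
end

section
/- Let s > 0 and C, D, E ∈ ℝ, let −1 < y < x < 1, and let P : ℝ → ℝ be the polynomial P(t) = −(D/5)t⁶ + (D − C/3)t⁴ + (2C − 3D)t² + Et + C − D. If P(x) = 0, P(y) = 0, P'(x) = −2s(1 − x²) and P'(y) = 2s(1 − y²), then y = −x and E = 0. -/
set_option maxHeartbeats 1000000

/-- The ε = 0 case of the boundary-condition analysis (3.10): the conditions
`P(x) = P(y) = 0`, `P'(x) = −2s(1−x²)`, `P'(y) = 2s(1−y²)` force `y = −x`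
and `E = 0`. -/
theorem stmt_5 (s C D E x y : ℝ) (hs : 0 < s)
    (hy : -1 < y) (hyx : y < x) (hx : x < 1) (P : ℝ → ℝ)
    (hP : P = fun t : ℝ =>
      -(D / 5) * t ^ 6 + (D - C / 3) * t ^ 4 + (2 * C - 3 * D) * t ^ 2
        + E * t + C - D)
    (hPx : P x = 0) (hPy : P y = 0)
    (hPx' : deriv P x = -2 * s * (1 - x ^ 2))
    (hPy' : deriv P y = 2 * s * (1 - y ^ 2)) :
    y = -x ∧ E = 0 := by
  subst hP
  have h1 : -(D / 5) * x ^ 6 + (D - C / 3) * x ^ 4 + (2 * C - 3 * D) * x ^ 2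
      + E * x + C - D = 0 := hPx
  have h2 : -(D / 5) * y ^ 6 + (D - C / 3) * y ^ 4 + (2 * C - 3 * D) * y ^ 2
      + E * y + C - D = 0 := hPy
  have hd : ∀ t : ℝ, deriv (fun t : ℝ =>
      -(D / 5) * t ^ 6 + (D - C / 3) * t ^ 4 + (2 * C - 3 * D) * t ^ 2
        + E * t + C - D) t
      = -(D / 5) * (6 * t ^ 5) + (D - C / 3) * (4 * t ^ 3)
        + (2 * C - 3 * D) * (2 * t) + E := by
    intro t
    have h6 : HasDerivAt (fun t : ℝ => t ^ 6) (6 * t ^ 5) t := by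
      simpa using hasDerivAt_pow 6 t
    have h4 : HasDerivAt (fun t : ℝ => t ^ 4) (4 * t ^ 3) t := by
      simpa using hasDerivAt_pow 4 t
    have hq : HasDerivAt (fun t : ℝ => t ^ 2) (2 * t) t := by
      simpa using hasDerivAt_pow 2 t
    have hid : HasDerivAt (fun t : ℝ => t) 1 t := hasDerivAt_id t
    have H : HasDerivAt (fun t : ℝ =>
        -(D / 5) * t ^ 6 + (D - C / 3) * t ^ 4 + (2 * C - 3 * D) * t ^ 2
          + E * t + C - D)
        (-(D / 5) * (6 * t ^ 5) + (D - C / 3) * (4 * t ^ 3)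
          + (2 * C - 3 * D) * (2 * t) + E) t := by
      have := ((((h6.const_mul (-(D / 5))).add (h4.const_mul (D - C / 3))).add
        (hq.const_mul (2 * C - 3 * D))).add (hid.const_mul E)).add_const C
      have := this.sub_const D
      exact this.congr_deriv (by ring)
    exact H.deriv
  rw [hd x] at hPx'
  rw [hd y] at hPy'
  -- eliminate C, D, E: the determinant identity
  have key : (x + y) * (s * (x - y) ^ 3 * (1 - x ^ 2) * (1 - y ^ 2) *
      (2 * x * y * (x ^ 2 + y ^ 2) + x ^ 2 * y ^ 2 + 3 * x ^ 2 + 3 * y ^ 2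
        - 16 * x * y + 5)) = 0 := by
    linear_combination
      (15*y - 20*y^3 - 6*y^5 + 12*y^7 - y^9 - 15*x + 45*x*y^4 - 30*x*y^6
        + 20*x^3 - 30*x^3*y^2 + 10*x^3*y^6 - 9*x^5 + 18*x^5*y^2 - 9*x^5*y^4) * h1
      + (-15*y + 20*y^3 - 9*y^5 + 15*x - 30*x^2*y^3 + 18*x^2*y^5 - 20*x^3
        + 45*x^4*y - 9*x^4*y^5 - 6*x^5 - 30*x^6*y + 10*x^6*y^3 + 12*x^7 - x^9) * h2
      + ((15/2)*y^2 - 15*y^4 + (15/2)*y^6 - 15*x*y + 20*x*y^3 + 6*x*y^5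
        - 12*x*y^7 + x*y^9 + (15/2)*x^2 + (-45/2)*x^2*y^4 + 15*x^2*y^6
        - 5*x^4 + (15/2)*x^4*y^2 + (-5/2)*x^4*y^6 + (3/2)*x^6 - 3*x^6*y^2
        + (3/2)*x^6*y^4) * hPx'
      + ((15/2)*y^2 - 5*y^4 + (3/2)*y^6 - 15*x*y + (15/2)*x^2
        + (15/2)*x^2*y^4 - 3*x^2*y^6 + 20*x^3*y - 15*x^4 + (-45/2)*x^4*y^2
        + (3/2)*x^4*y^6 + 6*x^5*y + (15/2)*x^6 + 15*x^6*y^2 + (-5/2)*x^6*y^4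
        - 12*x^7*y + x^9*y) * hPy'
  have hx2 : x ^ 2 < 1 := by nlinarith
  have hy2 : y ^ 2 < 1 := by nlinarith
  have hQ : 0 < 2 * x * y * (x ^ 2 + y ^ 2) + x ^ 2 * y ^ 2 + 3 * x ^ 2
      + 3 * y ^ 2 - 16 * x * y + 5 := by
    nlinarith [mul_pos (sub_pos.2 hx2) (sub_pos.2 hy2), sq_nonneg (x - y),
      sq_nonneg (x + y), sq_nonneg (x * y - 1), sq_nonneg (x * y + 1),
      mul_nonneg (mul_nonneg (sub_pos.2 hx2).le (sub_pos.2 hy2).le) (sq_nonneg (x - y)),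
      mul_nonneg (mul_nonneg (sub_pos.2 hx2).le (sub_pos.2 hy2).le) (sq_nonneg (x + y))]
  have hA : 0 < s * (x - y) ^ 3 * (1 - x ^ 2) * (1 - y ^ 2) *
      (2 * x * y * (x ^ 2 + y ^ 2) + x ^ 2 * y ^ 2 + 3 * x ^ 2 + 3 * y ^ 2
        - 16 * x * y + 5) := by
    have h3 : 0 < (x - y) ^ 3 := pow_pos (sub_pos.2 hyx) 3
    have := mul_pos (mul_pos (mul_pos (mul_pos hs h3) (sub_pos.2 hx2))
      (sub_pos.2 hy2)) hQ
    exact this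
  have hxy0 : x + y = 0 := by
    rcases mul_eq_zero.mp key with h | h
    · exact h
    · exact absurd h hA.ne'
  have hyeq : y = -x := by linarith
  refine ⟨hyeq, ?_⟩
  subst hyeq
  have hx0 : 0 < x := by linarith
  have hE : E * (2 * x) = 0 := by linear_combination h1 - h2
  rcases mul_eq_zero.mp hE with h | h
  · exact h
  · linarith
end

section
/- There do not exist real numbers C, D, E and real numbers x, y with 0 < x < y such that the function z : (0,∞) → ℝ defined by z(h) = −4 + D·h⁴ + C·h² + E/h satisfies z(x) = 0, z'(x) = 2, z(y) = 0 and z'(y) = −2. -/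
private lemma deriv_profile (C D E : ℝ) {x : ℝ} (hx : x ≠ 0) :
    deriv (fun h : ℝ => -4 + D * h ^ 4 + C * h ^ 2 + E / h) x
      = 4 * D * x ^ 3 + 2 * C * x - E / x ^ 2 := by
  have p1 : HasDerivAt (fun h : ℝ => D * h ^ 4) (D * (4 * x ^ 3)) x := by
    simpa using (hasDerivAt_pow 4 x).const_mul D
  have p2 : HasDerivAt (fun h : ℝ => C * h ^ 2) (C * (2 * x)) x := by
    simpa using (hasDerivAt_pow 2 x).const_mul C
  have p3 : HasDerivAt (fun h : ℝ => E / h) (E * (-(x ^ 2)⁻¹)) x := by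
    simpa [div_eq_mul_inv] using (hasDerivAt_inv hx).const_mul E
  have h : deriv (fun h : ℝ => -4 + D * h ^ 4 + C * h ^ 2 + E / h) x = _ :=
    (((p1.const_add (-4 : ℝ)).add p2).add p3).deriv
  rw [h]; field_simp; ring

/-- Computational core of Theorem 3, genus g > 1: no profile function
`z(h) = −4 + Dh⁴ + Ch² + E/h` can satisfy the boundary conditions
`z(x) = 0, z'(x) = 2, z(y) = 0, z'(y) = −2` with `0 < x < y`. -/
theorem stmt_6 :
    ¬ ∃ (C D E x y : ℝ), 0 < x ∧ x < y ∧
      (-4 + D * x ^ 4 + C * x ^ 2 + E / x = 0) ∧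
      deriv (fun h : ℝ => -4 + D * h ^ 4 + C * h ^ 2 + E / h) x = 2 ∧
      (-4 + D * y ^ 4 + C * y ^ 2 + E / y = 0) ∧
      deriv (fun h : ℝ => -4 + D * h ^ 4 + C * h ^ 2 + E / h) y = -2 := by
  rintro ⟨C, D, E, x, y, hx, hxy, z1, d1, z2, d2⟩
  have hy : 0 < y := lt_trans hx hxy
  have hx0 : x ≠ 0 := ne_of_gt hx
  have hy0 : y ≠ 0 := ne_of_gt hy
  rw [deriv_profile C D E hx0] at d1
  rw [deriv_profile C D E hy0] at d2
  -- clear denominators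
  have hP1 : D * x ^ 5 + C * x ^ 3 + E = 4 * x := by
    field_simp at z1; linarith
  have hQ1 : D * y ^ 5 + C * y ^ 3 + E = 4 * y := by
    field_simp at z2; linarith
  have hP2 : 4 * D * x ^ 5 + 2 * C * x ^ 3 - E = 2 * x ^ 2 := by
    field_simp at d1; linarith
  have hQ2 : 4 * D * y ^ 5 + 2 * C * y ^ 3 - E = -2 * y ^ 2 := by
    field_simp at d2; linarith
  -- the resultant identity: eliminating C, D, E
  have hR : x * y * (-8*y^7 - 4*x*y^7 + 6*x^2*y^6 + 48*x^2*y^5 - 40*x^3*y^4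
      - 40*x^4*y^3 + 48*x^5*y^2 - 6*x^6*y^2 + 4*x^7*y - 8*x^7) = 0 := by
    linear_combination
      (x*y*(15*x^2*y^2*(x^2-y^2))) * (hQ1 - hP1)
      + (y*(-3*y^2*(y^5-x^5) + 5*y^4*(y^3-x^3))) * (hP1 + hP2)
      + (x*(3*x^2*(y^5-x^5) - 5*x^4*(y^3-x^3))) * (hQ1 + hQ2)
  -- but that quantity is strictly negative for 0 < x < y
  have ht : 0 < y - x := by linarith
  have hS : 0 < 8*(y-x)^6 + 56*(x*(y-x)^5) + 4*(x*(y-x)^6) + 120*(x^2*(y-x)^4)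
      + 22*(x^2*(y-x)^5) + 80*(x^3*(y-x)^3) + 48*(x^3*(y-x)^4)
      + 50*(x^4*(y-x)^3) + 20*(x^5*(y-x)^2) := by
    have m0 : 0 < (y-x)^6 := pow_pos ht 6
    have m1 : 0 < x*(y-x)^5 := mul_pos hx (pow_pos ht 5)
    have m2 : 0 < x*(y-x)^6 := mul_pos hx (pow_pos ht 6)
    have m3 : 0 < x^2*(y-x)^4 := mul_pos (pow_pos hx 2) (pow_pos ht 4)
    have m4 : 0 < x^2*(y-x)^5 := mul_pos (pow_pos hx 2) (pow_pos ht 5)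
    have m5 : 0 < x^3*(y-x)^3 := mul_pos (pow_pos hx 3) (pow_pos ht 3)
    have m6 : 0 < x^3*(y-x)^4 := mul_pos (pow_pos hx 3) (pow_pos ht 4)
    have m7 : 0 < x^4*(y-x)^3 := mul_pos (pow_pos hx 4) (pow_pos ht 3)
    have m8 : 0 < x^5*(y-x)^2 := mul_pos (pow_pos hx 5) (pow_pos ht 2)
    linarith
  have hfac : x * y * (-8*y^7 - 4*x*y^7 + 6*x^2*y^6 + 48*x^2*y^5 - 40*x^3*y^4
      - 40*x^4*y^3 + 48*x^5*y^2 - 6*x^6*y^2 + 4*x^7*y - 8*x^7)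
      = -(x * y * (y - x) * (8*(y-x)^6 + 56*(x*(y-x)^5) + 4*(x*(y-x)^6)
        + 120*(x^2*(y-x)^4) + 22*(x^2*(y-x)^5) + 80*(x^3*(y-x)^3)
        + 48*(x^3*(y-x)^4) + 50*(x^4*(y-x)^3) + 20*(x^5*(y-x)^2))) := by
    ring
  have hpos : 0 < x * y * (y - x) * (8*(y-x)^6 + 56*(x*(y-x)^5) + 4*(x*(y-x)^6)
        + 120*(x^2*(y-x)^4) + 22*(x^2*(y-x)^5) + 80*(x^3*(y-x)^3)
        + 48*(x^3*(y-x)^4) + 50*(x^4*(y-x)^3) + 20*(x^5*(y-x)^2)) :=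
    mul_pos (mul_pos (mul_pos hx hy) ht) hS
  rw [hfac] at hR
  linarith
end

section
/- There do not exist real numbers C, D, E and real numbers x, y with 0 < x < y such that the function z : (0,∞) → ℝ defined by z(h) = D·h⁴ + C·h² + E/h satisfies z(x) = 0, z'(x) = 2, z(y) = 0 and z'(y) = −2. -/
/-- Computational core of Theorem 3, torus case: no profile function
`z(h) = Dh⁴ + Ch² + E/h` can satisfy the boundary conditions
`z(x) = 0, z'(x) = 2, z(y) = 0, z'(y) = −2` with `0 < x < y`. -/
theorem stmt_7 :
    ¬ ∃ (C D E x y : ℝ), 0 < x ∧ x < y ∧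
      (D * x ^ 4 + C * x ^ 2 + E / x = 0) ∧
      deriv (fun h : ℝ => D * h ^ 4 + C * h ^ 2 + E / h) x = 2 ∧
      (D * y ^ 4 + C * y ^ 2 + E / y = 0) ∧
      deriv (fun h : ℝ => D * h ^ 4 + C * h ^ 2 + E / h) y = -2 := by
  rintro ⟨C, D, E, x, y, hx, hxy, h1, h2, h3, h4⟩
  have hy : 0 < y := hx.trans hxy
  have hx0 : x ≠ 0 := hx.ne'
  have hy0 : y ≠ 0 := hy.ne'
  have key : ∀ t : ℝ, t ≠ 0 → HasDerivAt (fun h : ℝ => D * h ^ 4 + C * h ^ 2 + E / h)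
      (D * (4 * t ^ 3) + C * (2 * t) + E * (-(t ^ 2)⁻¹)) t := by
    intro t ht
    have d1 := (hasDerivAt_pow 4 t).const_mul D
    have d2 := (hasDerivAt_pow 2 t).const_mul C
    have d3 := (hasDerivAt_inv ht).const_mul E
    have := (d1.add d2).add d3
    simpa [div_eq_mul_inv, Pi.add_def] using this
  rw [(key x hx0).deriv] at h2
  rw [(key y hy0).deriv] at h4
  -- clear denominators
  have e1 : D * x ^ 5 + C * x ^ 3 + E = 0 := by
    have h := congrArg (· * x) h1
    simp only [zero_mul] at h
    field_simp at h
    linarith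
  have e3 : D * y ^ 5 + C * y ^ 3 + E = 0 := by
    have h := congrArg (· * y) h3
    simp only [zero_mul] at h
    field_simp at h
    linarith
  have e2 : 4 * D * x ^ 5 + 2 * C * x ^ 3 - E = 2 * x ^ 2 := by
    have h := congrArg (· * x ^ 2) h2
    field_simp at h
    linarith
  have e4 : 4 * D * y ^ 5 + 2 * C * y ^ 3 - E = -2 * y ^ 2 := by
    have h := congrArg (· * y ^ 2) h4
    field_simp at h
    linarith
  have eA : 5 * D * x ^ 5 + 3 * C * x ^ 3 = 2 * x ^ 2 := by linarith
  have eB : 5 * D * y ^ 5 + 3 * C * y ^ 3 = -2 * y ^ 2 := by linarith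
  have eC : D * (x ^ 5 - y ^ 5) + C * (x ^ 3 - y ^ 3) = 0 := by linarith
  have eq1 : 5 * D * (x ^ 3 + y ^ 3) + 3 * C * (x + y) = 0 := by
    have h : x ^ 2 * y ^ 2 * (5 * D * (x ^ 3 + y ^ 3) + 3 * C * (x + y)) = 0 := by
      linear_combination y ^ 2 * eA + x ^ 2 * eB
    have hxy2 : x ^ 2 * y ^ 2 ≠ 0 := by positivity
    exact (mul_eq_zero.mp h).resolve_left hxy2
  have hΔ : 0 < (y + x) * (y - x) ^ 3 * (2 * y ^ 2 + x * y + 2 * x ^ 2) := by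
    have h1 : 0 < y + x := by linarith
    have h2 : 0 < (y - x) ^ 3 := pow_pos (by linarith) 3
    have h3 : 0 < 2 * y ^ 2 + x * y + 2 * x ^ 2 := by positivity
    exact mul_pos (mul_pos h1 h2) h3
  have hDΔ : D * ((y + x) * (y - x) ^ 3 * (2 * y ^ 2 + x * y + 2 * x ^ 2)) = 0 := by
    linear_combination 3 * (x + y) * eC - (x ^ 3 - y ^ 3) * eq1
  have hD : D = 0 := by
    rcases mul_eq_zero.mp hDΔ with h | h
    · exact h
    · linarith
  rw [hD] at eA eB
  have hCx : 3 * C * x ^ 3 = 2 * x ^ 2 := by linarith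
  have hCy : 3 * C * y ^ 3 = -2 * y ^ 2 := by linarith
  nlinarith [pow_pos hx 3, pow_pos hy 3, pow_pos hx 2, pow_pos hy 2,
    mul_pos (pow_pos hx 2) (pow_pos hy 3), mul_pos (pow_pos hy 2) (pow_pos hx 3)]
end

section
/- Let η be the unique real root of the cubic ξ³ + 5ξ² + 75ξ + 59. For every x ∈ (−1, 1), the polynomial Q_x(t) = t³ + (2 + x)t² + (5 + 6x)t + 8 + 13x + 4x² satisfies Q_x(t) > 0 for all t ∈ (x, 1) if and only if η < x < 1. -/
private lemma Smono : StrictMono (fun ξ : ℝ => ξ ^ 3 + 5 * ξ ^ 2 + 75 * ξ + 59) := by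
  intro a b hab
  have h1 : 0 < a ^ 2 + a * b + b ^ 2 + 5 * a + 5 * b + 75 := by
    nlinarith [sq_nonneg (a - b), sq_nonneg (a + b + 10 / 3)]
  have h2 := mul_pos (sub_pos.2 hab) h1
  show a ^ 3 + 5 * a ^ 2 + 75 * a + 59 < b ^ 3 + 5 * b ^ 2 + 75 * b + 59
  nlinarith [h2]

private lemma le_of_sq {a b : ℝ} (h : a ^ 2 ≤ b ^ 2) (hb : 0 ≤ b) : a ≤ b := by
  nlinarith [sq_nonneg (a - b)]

private lemma lt_of_sq {a b : ℝ} (h : a ^ 2 < b ^ 2) (hb : 0 ≤ b) : a < b := by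
  nlinarith [sq_nonneg (a - b), sq_nonneg (a + b)]

/-- Positivity of the cubic factor `Q_x(t)` on `(x, 1)` holds exactly for
`x ∈ (η, 1)`, where `η` is the unique real root of `ξ³ + 5ξ² + 75ξ + 59`. -/
theorem stmt_9 (η : ℝ)
    (hη : η ^ 3 + 5 * η ^ 2 + 75 * η + 59 = 0)
    (hηuniq : ∀ ξ : ℝ, ξ ^ 3 + 5 * ξ ^ 2 + 75 * ξ + 59 = 0 → ξ = η)
    (x : ℝ) (hx1 : -1 < x) (hx2 : x < 1) :
    (∀ t : ℝ, x < t → t < 1 →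
        0 < t ^ 3 + (2 + x) * t ^ 2 + (5 + 6 * x) * t + 8 + 13 * x + 4 * x ^ 2)
      ↔ (η < x ∧ x < 1) := by
  constructor
  · intro h
    refine ⟨?_, hx2⟩
    by_contra hlt
    push_neg at hlt
    have hS : x ^ 3 + 5 * x ^ 2 + 75 * x + 59 ≤ 0 := by
      rcases eq_or_lt_of_le hlt with he | hl
      · rw [he]; exact le_of_eq hη
      · have h5 : x ^ 3 + 5 * x ^ 2 + 75 * x + 59 < η ^ 3 + 5 * η ^ 2 + 75 * η + 59 := Smono hl
        linarith only [h5, hη.le]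
    have hx34 : x < -3 / 4 := by
      by_contra hc
      push_neg at hc
      have hq : (0:ℝ) ≤ x ^ 2 * (x + 5) := mul_nonneg (sq_nonneg x) (by linarith)
      linarith only [hS, hq, hc]
    have hD : 0 < x ^ 2 - 14 * x - 11 := by
      have hq2 : (0:ℝ) < (-(x + 3 / 4)) * (59 / 4 - x) :=
        mul_pos (by linarith) (by linarith)
      linarith only [hq2]
    set d := Real.sqrt (x ^ 2 - 14 * x - 11) with hdef
    have hd2 : d ^ 2 = x ^ 2 - 14 * x - 11 := Real.sq_sqrt hD.le
    have hd0 : 0 < d := Real.sqrt_pos.2 hD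
    set t0 : ℝ := (d - (2 + x)) / 3 with ht0
    have h1 : x < t0 := by
      rw [ht0, lt_div_iff₀ (by norm_num : (0:ℝ) < 3)]; linarith
    have h2 : t0 < 1 := by
      have hdlt : d < 5 + x := by
        by_contra hcon
        push_neg at hcon
        have h6 : (5 + x) * (5 + x) ≤ d * d :=
          mul_le_mul hcon hcon (by linarith) (Real.sqrt_nonneg _)
        nlinarith [h6, hd2, hx1]
      rw [ht0, div_lt_iff₀ (by norm_num : (0:ℝ) < 3)]; linarith
    have hQ := h t0 h1 h2
    have key : 27 * (t0 ^ 3 + (2 + x) * t0 ^ 2 + (5 + 6 * x) * t0 + 8 + 13 * x + 4 * x ^ 2)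
        = 2 * (x ^ 3 + 33 * x ^ 2 + 111 * x + 71) - 2 * d * (x ^ 2 - 14 * x - 11) := by
      rw [ht0]
      linear_combination d * hd2
    have h4D3 : (2 * d * (x ^ 2 - 14 * x - 11)) ^ 2 = 4 * (x ^ 2 - 14 * x - 11) ^ 3 := by
      linear_combination 4 * (x ^ 2 - 14 * x - 11) ^ 2 * hd2
    have hE2 : (2 * (x ^ 3 + 33 * x ^ 2 + 111 * x + 71)) ^ 2 ≤ 4 * (x ^ 2 - 14 * x - 11) ^ 3 := by
      have hp : 0 ≤ 432 * (x + 1) ^ 2 * (-(x ^ 3 + 5 * x ^ 2 + 75 * x + 59)) :=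
        mul_nonneg (by positivity) (by linarith)
      have heq : (2 * (x ^ 3 + 33 * x ^ 2 + 111 * x + 71)) ^ 2
          = 4 * (x ^ 2 - 14 * x - 11) ^ 3
            + 432 * (x + 1) ^ 2 * (x ^ 3 + 5 * x ^ 2 + 75 * x + 59) := by ring
      linarith only [hp, heq]
    have hb : 0 < 2 * d * (x ^ 2 - 14 * x - 11) := by positivity
    have hEle : 2 * (x ^ 3 + 33 * x ^ 2 + 111 * x + 71) ≤ 2 * d * (x ^ 2 - 14 * x - 11) :=
      le_of_sq (by linarith only [hE2, h4D3]) hb.le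
    linarith only [key, hQ, hEle]
  · rintro ⟨hηx, -⟩
    intro t ht1 ht2
    have hS : 0 < x ^ 3 + 5 * x ^ 2 + 75 * x + 59 := by
      have h5 : η ^ 3 + 5 * η ^ 2 + 75 * η + 59 < x ^ 3 + 5 * x ^ 2 + 75 * x + 59 := Smono hηx
      linarith only [h5, hη.ge]
    rcases le_or_gt (3 * (x ^ 2 - 14 * x - 11))
        ((3 * t + 2 + x) ^ 2 + (3 * t + 2 + x) * (4 * x + 2) + (4 * x + 2) ^ 2) with hc | hc
    · have e1 : 0 ≤ (3 * t - 3 * x) *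
          ((3 * t + 2 + x) ^ 2 + (3 * t + 2 + x) * (4 * x + 2) + (4 * x + 2) ^ 2
            - 3 * (x ^ 2 - 14 * x - 11)) :=
        mul_nonneg (by linarith) (by linarith)
      have hx4 : (0:ℝ) < (x + 1) * (x + 1) * (x + 4) :=
        mul_pos (mul_pos (by linarith) (by linarith)) (by linarith)
      nlinarith [e1, hx4]
    · have hD : 0 < x ^ 2 - 14 * x - 11 := by
        have h7 := sq_nonneg (3 * t + 2 + x + (4 * x + 2) / 2)
        have h8 := sq_nonneg (4 * x + 2)
        linarith only [hc, h7, h8]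
      have hxh : x < -1 / 2 := by
        by_contra hc2
        push_neg at hc2
        have hsq : (0:ℝ) < (1 - x) * (1 + x) := mul_pos (by linarith) (by linarith)
        linarith only [hD, hsq, hc2]
      set d := Real.sqrt (x ^ 2 - 14 * x - 11) with hdef
      have hd2 : d ^ 2 = x ^ 2 - 14 * x - 11 := Real.sq_sqrt hD.le
      have hd0 : 0 < d := Real.sqrt_pos.2 hD
      have h3 : 0 < 3 * t + 2 + x + 2 * d := by
        by_contra hcon
        push_neg at hcon
        have hp1 : (0:ℝ) ≤ (-(3 * t + 2 + x) - 2 * d) * (-(3 * t + 2 + x) + 2 * d) :=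
          mul_nonneg (by linarith) (by linarith)
        have hp2 : (0:ℝ) ≤ (-(3 * t + 2 + x)) * (-(4 * x + 2)) :=
          mul_nonneg (by linarith) (by linarith)
        linarith only [hc, hp1, hp2, hd2, hD, sq_nonneg (4 * x + 2)]
      have hEpos : 0 < x ^ 3 + 33 * x ^ 2 + 111 * x + 71 := by
        linarith only [hS, sq_nonneg (x + 9 / 14)]
      have h4D3 : (2 * d * (x ^ 2 - 14 * x - 11)) ^ 2 = 4 * (x ^ 2 - 14 * x - 11) ^ 3 := by
        linear_combination 4 * (x ^ 2 - 14 * x - 11) ^ 2 * hd2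
      have hE2 : 4 * (x ^ 2 - 14 * x - 11) ^ 3 < (2 * (x ^ 3 + 33 * x ^ 2 + 111 * x + 71)) ^ 2 := by
        have h9 : (0:ℝ) < x + 1 := by linarith
        have hp : 0 < 432 * ((x + 1) * (x + 1)) * (x ^ 3 + 5 * x ^ 2 + 75 * x + 59) :=
          mul_pos (mul_pos (by norm_num) (mul_pos h9 h9)) hS
        have heq : (2 * (x ^ 3 + 33 * x ^ 2 + 111 * x + 71)) ^ 2
            = 4 * (x ^ 2 - 14 * x - 11) ^ 3
              + 432 * ((x + 1) * (x + 1)) * (x ^ 3 + 5 * x ^ 2 + 75 * x + 59) := by ring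
        linarith only [hp, heq]
      have hgt : 2 * d * (x ^ 2 - 14 * x - 11) < 2 * (x ^ 3 + 33 * x ^ 2 + 111 * x + 71) :=
        lt_of_sq (by linarith only [hE2, h4D3]) (by linarith only [hEpos])
      have key : 27 * (t ^ 3 + (2 + x) * t ^ 2 + (5 + 6 * x) * t + 8 + 13 * x + 4 * x ^ 2)
          = (3 * t + 2 + x - d) ^ 2 * (3 * t + 2 + x + 2 * d)
            + (2 * (x ^ 3 + 33 * x ^ 2 + 111 * x + 71) - 2 * d * (x ^ 2 - 14 * x - 11)) := by
        linear_combination (3 * (3 * t + 2 + x) - 2 * d) * hd2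
      linarith only [key, mul_nonneg (sq_nonneg (3 * t + 2 + x - d)) h3.le, hgt]
end

section
/- Let y < x be real numbers and let z : ℝ → ℝ be twice continuously differentiable with z(y) = 0, z(x) = 0, z(t) > 0 for all t ∈ (y, x), z'(y) = 2 and z'(x) = −2. Then there exist a > 0 and a strictly increasing, continuously differentiable function h : [−a, a] → ℝ such that h(−a) = y, h(a) = x, and h'(t) = √(z(h(t))) for all t ∈ [−a, a]; moreover h' is differentiable on [−a, a] (one-sidedly at the endpoints) with h''(−a) = 1 and h''(a) = −1. -/
open Set MeasureTheory intervalIntegral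

private lemma stmt10_near_left {z : ℝ → ℝ} {y : ℝ} (hz : ContDiff ℝ 2 z) (hzy : z y = 0)
    (hzy' : deriv z y = 2) {η : ℝ} (hη : 0 < η) {xx : ℝ} (hd0 : 0 < xx) :
    ∃ δ : ℝ, 0 < δ ∧ δ ≤ xx ∧ ∀ u ∈ Set.Icc y (y + δ),
      (2 - η) * (u - y) ≤ z u ∧ z u ≤ (2 + η) * (u - y) := by
  have hzdiff : Differentiable ℝ z := hz.differentiable two_ne_zero
  have hdc : Continuous (deriv z) := hz.continuous_deriv one_le_two
  have hca : ContinuousAt (deriv z) y := hdc.continuousAt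
  rw [Metric.continuousAt_iff] at hca
  obtain ⟨δ₀, hδ₀, hball⟩ := hca η hη
  refine ⟨min (δ₀ / 2) xx, by positivity, min_le_right _ _, ?_⟩
  set δ := min (δ₀ / 2) xx with hδdef
  have hderiv_bound : ∀ u ∈ Set.Icc y (y + δ), |deriv z u - 2| < η := by
    intro u hu
    have h1 : dist u y < δ₀ := by
      rw [Real.dist_eq, abs_of_nonneg (by linarith [hu.1])]
      have := hu.2
      have : u - y ≤ δ := by linarith
      have hδle : δ ≤ δ₀ / 2 := min_le_left _ _
      linarith
    have := hball h1
    rwa [hzy', Real.dist_eq] at this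
  intro u hu
  have hg : ∀ c u : ℝ, HasDerivAt (fun v => z v - c * (v - y)) (deriv z u - c) u := by
    intro c u
    have h1 : HasDerivAt (fun v : ℝ => c * (v - y)) (c * 1) u :=
      ((hasDerivAt_id u).sub_const y).const_mul c
    simpa using (hzdiff u).hasDerivAt.fun_sub h1
  constructor
  · -- lower bound
    have hmono : MonotoneOn (fun v => z v - (2 - η) * (v - y)) (Set.Icc y (y + δ)) := by
      apply monotoneOn_of_deriv_nonneg (convex_Icc _ _)
      · exact (Differentiable.continuous (fun v => (hg (2 - η) v).differentiableAt)).continuousOn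
      · intro v hv
        exact ((hg (2 - η) v).differentiableAt).differentiableWithinAt
      · intro v hv
        rw [(hg (2 - η) v).deriv]
        have := hderiv_bound v (interior_subset hv)
        have := abs_lt.mp this
        linarith [this.1]
    have := hmono (Set.left_mem_Icc.2 (by linarith [hu.1, hu.2])) hu hu.1
    simp only [hzy, sub_self, mul_zero, sub_zero, zero_sub] at this
    linarith
  · -- upper bound
    have hanti : AntitoneOn (fun v => z v - (2 + η) * (v - y)) (Set.Icc y (y + δ)) := by
      apply antitoneOn_of_deriv_nonpos (convex_Icc _ _)
      · exact (Differentiable.continuous (fun v => (hg (2 + η) v).differentiableAt)).continuousOn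
      · intro v hv
        exact ((hg (2 + η) v).differentiableAt).differentiableWithinAt
      · intro v hv
        rw [(hg (2 + η) v).deriv]
        have := abs_lt.mp (hderiv_bound v (interior_subset hv))
        linarith [this.2]
    have := hanti (Set.left_mem_Icc.2 (by linarith [hu.1, hu.2])) hu hu.1
    simp only [hzy, sub_self, mul_zero, sub_zero, zero_sub] at this
    linarith

private lemma stmt10_near_right {z : ℝ → ℝ} {x : ℝ} (hz : ContDiff ℝ 2 z) (hzx : z x = 0)
    (hzx' : deriv z x = -2) {η : ℝ} (hη : 0 < η) {xx : ℝ} (hd0 : 0 < xx) :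
    ∃ δ : ℝ, 0 < δ ∧ δ ≤ xx ∧ ∀ u ∈ Set.Icc (x - δ) x,
      (2 - η) * (x - u) ≤ z u ∧ z u ≤ (2 + η) * (x - u) := by
  have hzdiff : Differentiable ℝ z := hz.differentiable two_ne_zero
  have hdc : Continuous (deriv z) := hz.continuous_deriv one_le_two
  have hca : ContinuousAt (deriv z) x := hdc.continuousAt
  rw [Metric.continuousAt_iff] at hca
  obtain ⟨δ₀, hδ₀, hball⟩ := hca η hη
  refine ⟨min (δ₀ / 2) xx, by positivity, min_le_right _ _, ?_⟩
  set δ := min (δ₀ / 2) xx with hδdef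
  have hderiv_bound : ∀ u ∈ Set.Icc (x - δ) x, |deriv z u - (-2)| < η := by
    intro u hu
    have h1 : dist u x < δ₀ := by
      rw [Real.dist_eq, abs_of_nonpos (by linarith [hu.2])]
      have := hu.1
      have hδle : δ ≤ δ₀ / 2 := min_le_left _ _
      linarith
    have := hball h1
    rwa [hzx', Real.dist_eq] at this
  intro u hu
  have hg : ∀ c u : ℝ, HasDerivAt (fun v => z v - c * (x - v)) (deriv z u + c) u := by
    intro c u
    have h1 : HasDerivAt (fun v : ℝ => c * (x - v)) (c * (0 - 1)) u :=
      ((hasDerivAt_const u x).sub (hasDerivAt_id u)).const_mul c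
    have := (hzdiff u).hasDerivAt.fun_sub h1
    simpa [sub_eq_add_neg, mul_comm] using this
  constructor
  · -- lower bound: z u - (2-η)(x-u) antitone, value at x is 0
    have hanti : AntitoneOn (fun v => z v - (2 - η) * (x - v)) (Set.Icc (x - δ) x) := by
      apply antitoneOn_of_deriv_nonpos (convex_Icc _ _)
      · exact (Differentiable.continuous (fun v => (hg (2 - η) v).differentiableAt)).continuousOn
      · intro v hv
        exact ((hg (2 - η) v).differentiableAt).differentiableWithinAt
      · intro v hv
        rw [(hg (2 - η) v).deriv]
        have := abs_lt.mp (hderiv_bound v (interior_subset hv))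
        linarith [this.2]
    have := hanti hu (Set.right_mem_Icc.2 (by linarith [hu.1, hu.2])) hu.2
    simp only [hzx, sub_self, mul_zero, sub_zero] at this
    linarith
  · have hmono : MonotoneOn (fun v => z v - (2 + η) * (x - v)) (Set.Icc (x - δ) x) := by
      apply monotoneOn_of_deriv_nonneg (convex_Icc _ _)
      · exact (Differentiable.continuous (fun v => (hg (2 + η) v).differentiableAt)).continuousOn
      · intro v hv
        exact ((hg (2 + η) v).differentiableAt).differentiableWithinAt
      · intro v hv
        rw [(hg (2 + η) v).deriv]
        have := abs_lt.mp (hderiv_bound v (interior_subset hv))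
        linarith [this.1]
    have := hmono hu (Set.right_mem_Icc.2 (by linarith [hu.1, hu.2])) hu.2
    simp only [hzx, sub_self, mul_zero, sub_zero] at this
    linarith

private lemma stmt10_int_rpow_left {y s : ℝ} (hys : y ≤ s) :
    ∫ u in y..s, (u - y) ^ (-(1/2) : ℝ) = 2 * Real.sqrt (s - y) := by
  rw [intervalIntegral.integral_comp_sub_right (fun v => v ^ (-(1/2):ℝ)) y, sub_self,
    integral_rpow (Or.inl (by norm_num)), Real.sqrt_eq_rpow]
  rw [show (-(1/2) : ℝ) + 1 = 1/2 by norm_num, Real.zero_rpow (by norm_num)]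
  ring

private lemma stmt10_int_rpow_right {s x : ℝ} (hsx : s ≤ x) :
    ∫ u in s..x, (x - u) ^ (-(1/2) : ℝ) = 2 * Real.sqrt (x - s) := by
  rw [intervalIntegral.integral_comp_sub_left (fun v => v ^ (-(1/2):ℝ)) x, sub_self,
    integral_rpow (Or.inl (by norm_num)), Real.sqrt_eq_rpow]
  rw [show (-(1/2) : ℝ) + 1 = 1/2 by norm_num, Real.zero_rpow (by norm_num)]
  ring

private lemma stmt10_intint_rpow_left (y s : ℝ) :
    IntervalIntegrable (fun u => (u - y) ^ (-(1/2):ℝ)) MeasureTheory.volume y s := by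
  have h := (intervalIntegral.intervalIntegrable_rpow' (a := y - y) (b := s - y)
    (r := -(1/2)) (by norm_num)).comp_sub_right y
  simpa using h

private lemma stmt10_intint_rpow_right (s x : ℝ) :
    IntervalIntegrable (fun u => (x - u) ^ (-(1/2):ℝ)) MeasureTheory.volume s x := by
  have h := (intervalIntegral.intervalIntegrable_rpow' (a := x - s) (b := x - x)
    (r := -(1/2)) (by norm_num)).comp_sub_left x
  simpa using h

-- pointwise identity: ((√(c*(u-y)))⁻¹ = (√c)⁻¹ * (u-y)^(-1/2)) for u ≥ y, c ≥ 0
private lemma stmt10_ptwise {c w : ℝ} (hc : 0 ≤ c) (hw : 0 ≤ w) :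
    (Real.sqrt (c * w))⁻¹ = (Real.sqrt c)⁻¹ * w ^ (-(1/2) : ℝ) := by
  rw [Real.sqrt_mul hc, mul_inv, Real.rpow_neg hw, Real.sqrt_eq_rpow, Real.sqrt_eq_rpow]

private lemma stmt10_G_upper {y s c : ℝ} {p : ℝ → ℝ} (hys : y < s) (hc : 0 < c)
    (hint : IntervalIntegrable p MeasureTheory.volume y s) (hpy : p y = 0)
    (hbound : ∀ u ∈ Set.Ioc y s, p u ≤ (Real.sqrt (c * (u - y)))⁻¹) :
    ∫ u in y..s, p u ≤ (Real.sqrt c)⁻¹ * (2 * Real.sqrt (s - y)) := by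
  have hint2 := ((stmt10_intint_rpow_left y s).const_mul (Real.sqrt c)⁻¹)
  have key : ∀ u ∈ Set.Icc y s, p u ≤ (Real.sqrt c)⁻¹ * (u - y) ^ (-(1/2):ℝ) := by
    intro u hu
    rcases eq_or_lt_of_le hu.1 with h | h
    · rw [← h, hpy, sub_self, Real.zero_rpow (by norm_num), mul_zero]
    · exact (hbound u ⟨h, hu.2⟩).trans_eq (stmt10_ptwise hc.le (by linarith))
  calc ∫ u in y..s, p u
      ≤ ∫ u in y..s, (Real.sqrt c)⁻¹ * (u - y) ^ (-(1/2):ℝ) :=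
        intervalIntegral.integral_mono_on hys.le hint hint2 key
    _ = (Real.sqrt c)⁻¹ * ∫ u in y..s, (u - y) ^ (-(1/2):ℝ) :=
        intervalIntegral.integral_const_mul _ _
    _ = _ := by rw [stmt10_int_rpow_left hys.le]

private lemma stmt10_G_lower {y s c : ℝ} {p : ℝ → ℝ} (hys : y < s) (hc : 0 < c)
    (hint : IntervalIntegrable p MeasureTheory.volume y s) (hpy : p y = 0)
    (hbound : ∀ u ∈ Set.Ioc y s, (Real.sqrt (c * (u - y)))⁻¹ ≤ p u) :
    (Real.sqrt c)⁻¹ * (2 * Real.sqrt (s - y)) ≤ ∫ u in y..s, p u := by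
  have hint2 := ((stmt10_intint_rpow_left y s).const_mul (Real.sqrt c)⁻¹)
  have key : ∀ u ∈ Set.Icc y s, (Real.sqrt c)⁻¹ * (u - y) ^ (-(1/2):ℝ) ≤ p u := by
    intro u hu
    rcases eq_or_lt_of_le hu.1 with h | h
    · rw [← h, hpy, sub_self, Real.zero_rpow (by norm_num), mul_zero]
    · exact ((stmt10_ptwise hc.le (by linarith)).symm.trans_le (hbound u ⟨h, hu.2⟩))
  calc (Real.sqrt c)⁻¹ * (2 * Real.sqrt (s - y))
      = ∫ u in y..s, (Real.sqrt c)⁻¹ * (u - y) ^ (-(1/2):ℝ) := by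
        rw [intervalIntegral.integral_const_mul, stmt10_int_rpow_left hys.le]
    _ ≤ ∫ u in y..s, p u := intervalIntegral.integral_mono_on hys.le hint2 hint key

private lemma stmt10_G_upper' {s x c : ℝ} {p : ℝ → ℝ} (hsx : s < x) (hc : 0 < c)
    (hint : IntervalIntegrable p MeasureTheory.volume s x) (hpx : p x = 0)
    (hbound : ∀ u ∈ Set.Ico s x, p u ≤ (Real.sqrt (c * (x - u)))⁻¹) :
    ∫ u in s..x, p u ≤ (Real.sqrt c)⁻¹ * (2 * Real.sqrt (x - s)) := by
  have hint2 := ((stmt10_intint_rpow_right s x).const_mul (Real.sqrt c)⁻¹)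
  have key : ∀ u ∈ Set.Icc s x, p u ≤ (Real.sqrt c)⁻¹ * (x - u) ^ (-(1/2):ℝ) := by
    intro u hu
    rcases eq_or_lt_of_le hu.2 with h | h
    · rw [h, hpx, sub_self, Real.zero_rpow (by norm_num), mul_zero]
    · exact (hbound u ⟨hu.1, h⟩).trans_eq (stmt10_ptwise hc.le (by linarith))
  calc ∫ u in s..x, p u
      ≤ ∫ u in s..x, (Real.sqrt c)⁻¹ * (x - u) ^ (-(1/2):ℝ) :=
        intervalIntegral.integral_mono_on hsx.le hint hint2 key
    _ = (Real.sqrt c)⁻¹ * ∫ u in s..x, (x - u) ^ (-(1/2):ℝ) :=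
        intervalIntegral.integral_const_mul _ _
    _ = _ := by rw [stmt10_int_rpow_right hsx.le]

private lemma stmt10_G_lower' {s x c : ℝ} {p : ℝ → ℝ} (hsx : s < x) (hc : 0 < c)
    (hint : IntervalIntegrable p MeasureTheory.volume s x) (hpx : p x = 0)
    (hbound : ∀ u ∈ Set.Ico s x, (Real.sqrt (c * (x - u)))⁻¹ ≤ p u) :
    (Real.sqrt c)⁻¹ * (2 * Real.sqrt (x - s)) ≤ ∫ u in s..x, p u := by
  have hint2 := ((stmt10_intint_rpow_right s x).const_mul (Real.sqrt c)⁻¹)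
  have key : ∀ u ∈ Set.Icc s x, (Real.sqrt c)⁻¹ * (x - u) ^ (-(1/2):ℝ) ≤ p u := by
    intro u hu
    rcases eq_or_lt_of_le hu.2 with h | h
    · rw [h, hpx, sub_self, Real.zero_rpow (by norm_num), mul_zero]
    · exact ((stmt10_ptwise hc.le (by linarith)).symm.trans_le (hbound u ⟨hu.1, h⟩))
  calc (Real.sqrt c)⁻¹ * (2 * Real.sqrt (x - s))
      = ∫ u in s..x, (Real.sqrt c)⁻¹ * (x - u) ^ (-(1/2):ℝ) := by
        rw [intervalIntegral.integral_const_mul, stmt10_int_rpow_right hsx.le]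
    _ ≤ ∫ u in s..x, p u := intervalIntegral.integral_mono_on hsx.le hint2 hint key

set_option maxHeartbeats 1000000 in
/-- ODE boundary-value lemma of Theorems 2 and 4: if `z` is C², positive
between two simple zeros `y < x` with `z'(y) = 2` and `z'(x) = −2`, then
`h' = √(z ∘ h)` has a strictly increasing C¹ solution `h : [−a, a] → ℝ`
joining `y` to `x`, with `h''(−a) = 1` and `h''(a) = −1` (one-sided). -/
theorem stmt_10 (x y : ℝ) (hyx : y < x) (z : ℝ → ℝ)
    (hz : ContDiff ℝ 2 z)
    (hzy : z y = 0) (hzx : z x = 0)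
    (hpos : ∀ t ∈ Set.Ioo y x, 0 < z t)
    (hzy' : deriv z y = 2) (hzx' : deriv z x = -2) :
    ∃ a : ℝ, 0 < a ∧ ∃ h : ℝ → ℝ,
      StrictMonoOn h (Set.Icc (-a) a) ∧
      h (-a) = y ∧ h a = x ∧
      (∀ t ∈ Set.Icc (-a) a,
        HasDerivWithinAt h (Real.sqrt (z (h t))) (Set.Icc (-a) a) t) ∧
      ContinuousOn (fun t => derivWithin h (Set.Icc (-a) a) t) (Set.Icc (-a) a) ∧
      (∀ t ∈ Set.Icc (-a) a,
        DifferentiableWithinAt ℝ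
          (fun u => derivWithin h (Set.Icc (-a) a) u) (Set.Icc (-a) a) t) ∧
      derivWithin (fun u => derivWithin h (Set.Icc (-a) a) u)
          (Set.Icc (-a) a) (-a) = 1 ∧
      derivWithin (fun u => derivWithin h (Set.Icc (-a) a) u)
          (Set.Icc (-a) a) a = -1 := by
  classical
  set p : ℝ → ℝ := fun u => (Real.sqrt (z u))⁻¹ with hpdef
  have hzc : Continuous z := hz.continuous
  have hpmeas : Measurable p := (Real.continuous_sqrt.comp hzc).measurable.inv
  have hppos : ∀ u ∈ Set.Ioo y x, 0 < p u := fun u hu => inv_pos.2 (Real.sqrt_pos.2 (hpos u hu))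
  have hpnonneg : ∀ u, 0 ≤ p u := fun u => inv_nonneg.2 (Real.sqrt_nonneg _)
  have hpy0 : p y = 0 := by simp [hpdef, hzy]
  have hpx0 : p x = 0 := by simp [hpdef, hzx]
  have hthird : (0:ℝ) < (x - y)/3 := by linarith
  obtain ⟨δl, hδl0, hδlle, hδl⟩ := stmt10_near_left hz hzy hzy' one_pos hthird
  obtain ⟨δr, hδr0, hδrle, hδr⟩ := stmt10_near_right hz hzx hzx' one_pos hthird
  -- integrability
  have hIoc : IntegrableOn p (Ioc y x) volume := by
    have h1 : IntegrableOn p (Ioc y (y + δl)) volume := by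
      have hg : IntegrableOn (fun u => (u - y) ^ (-(1/2):ℝ)) (Ioc y (y + δl)) volume :=
        (intervalIntegrable_iff_integrableOn_Ioc_of_le (by linarith)).mp
          (stmt10_intint_rpow_left y (y + δl))
      apply Integrable.mono' hg (hpmeas.aestronglyMeasurable.restrict)
      rw [ae_restrict_iff' measurableSet_Ioc]
      filter_upwards with u hu
      have huy : y < u := hu.1
      have hzb := (hδl u ⟨huy.le, hu.2⟩).1
      have hzub : u - y ≤ z u := by linarith
      rw [Real.norm_eq_abs, abs_of_nonneg (hpnonneg u), hpdef]
      rw [Real.rpow_neg (by linarith), ← Real.sqrt_eq_rpow]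
      exact inv_anti₀ (Real.sqrt_pos.2 (by linarith)) (Real.sqrt_le_sqrt hzub)
    have h3 : IntegrableOn p (Ioc (x - δr) x) volume := by
      have hg : IntegrableOn (fun u => (x - u) ^ (-(1/2):ℝ)) (Ioc (x - δr) x) volume :=
        (intervalIntegrable_iff_integrableOn_Ioc_of_le (by linarith)).mp
          (stmt10_intint_rpow_right (x - δr) x)
      apply Integrable.mono' hg (hpmeas.aestronglyMeasurable.restrict)
      rw [ae_restrict_iff' measurableSet_Ioc]
      filter_upwards with u hu
      rcases eq_or_lt_of_le hu.2 with hux | hux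
      · rw [hux, hpx0, Real.norm_eq_abs, abs_zero, sub_self,
          Real.zero_rpow (by norm_num)]
      · have hzb := (hδr u ⟨hu.1.le, hu.2⟩).1
        have hzub : x - u ≤ z u := by linarith
        rw [Real.norm_eq_abs, abs_of_nonneg (hpnonneg u), hpdef]
        rw [Real.rpow_neg (by linarith), ← Real.sqrt_eq_rpow]
        exact inv_anti₀ (Real.sqrt_pos.2 (by linarith)) (Real.sqrt_le_sqrt hzub)
    have h2 : IntegrableOn p (Ioc (y + δl) (x - δr)) volume := by
      rcases le_or_gt (x - δr) (y + δl) with hle | hlt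
      · rw [Set.Ioc_eq_empty (by exact fun hcon => absurd hcon (not_lt.2 hle))]
        exact integrableOn_empty
      · apply IntegrableOn.mono_set _ Set.Ioc_subset_Icc_self
        apply ContinuousOn.integrableOn_Icc
        apply ContinuousOn.inv₀ ((Real.continuous_sqrt.comp hzc).continuousOn)
        intro u hu
        have : 0 < z u := hpos u ⟨by linarith [hu.1], by linarith [hu.2]⟩
        exact ne_of_gt (Real.sqrt_pos.2 this)
    have hunion : Ioc y x ⊆ Ioc y (y + δl) ∪ (Ioc (y + δl) (x - δr) ∪ Ioc (x - δr) x) := by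
      intro u hu
      rcases le_or_gt u (y + δl) with h | h
      · exact Or.inl ⟨hu.1, h⟩
      rcases le_or_gt u (x - δr) with h' | h'
      · exact Or.inr (Or.inl ⟨h, h'⟩)
      · exact Or.inr (Or.inr ⟨h', hu.2⟩)
    exact ((h1.union (h2.union h3)).mono_set hunion)
  have hsub : ∀ s t : ℝ, y ≤ s → s ≤ x → y ≤ t → t ≤ x →
      IntervalIntegrable p volume s t := by
    intro s t h1 h2 h3 h4
    rw [intervalIntegrable_iff]
    exact hIoc.mono_set (Set.Ioc_subset_Ioc (le_min h1 h3) (max_le h2 h4))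
  set G : ℝ → ℝ := fun s => ∫ u in y..s, p u with hGdef
  have hGy : G y = 0 := intervalIntegral.integral_same
  have hGdiff : ∀ s t : ℝ, y ≤ s → s ≤ x → y ≤ t → t ≤ x →
      G t - G s = ∫ u in s..t, p u := by
    intro s t h1 h2 h3 h4
    have := intervalIntegral.integral_add_adjacent_intervals
      (hsub y s le_rfl hyx.le h1 h2) (hsub s t h1 h2 h3 h4)
    rw [hGdef]
    simp only []
    linarith [this]
  have hGmono : StrictMonoOn G (Icc y x) := by
    intro s hs t ht hst
    have hgt : 0 < ∫ u in s..t, p u :=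
      intervalIntegral_pos_of_pos_on (hsub s t hs.1 hs.2 ht.1 ht.2)
        (fun u hu => hppos u ⟨lt_of_le_of_lt hs.1 hu.1, lt_of_lt_of_le hu.2 ht.2⟩) hst
    have := hGdiff s t hs.1 hs.2 ht.1 ht.2
    linarith
  have hGcont : ContinuousOn G (Icc y x) := by
    have hIcc : IntegrableOn p (Icc y x) volume :=
      (integrableOn_Icc_iff_integrableOn_Ioc).mpr hIoc
    have hc := intervalIntegral.continuousOn_primitive hIcc
    apply hc.congr
    intro s hs
    rw [hGdef]
    exact intervalIntegral.integral_of_le hs.1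
  set L := G x with hLdef
  have hL : 0 < L := by
    have := hGdiff y x le_rfl hyx.le hyx.le le_rfl
    rw [hGy, sub_zero] at this
    rw [hLdef, this]
    exact intervalIntegral_pos_of_pos_on (hsub y x le_rfl hyx.le hyx.le le_rfl)
      (fun u hu => hppos u hu) hyx
  set a := L / 2 with hadef
  have ha : 0 < a := by rw [hadef]; linarith
  have haa : -a < a := by linarith
  have hL2 : L = a + a := by rw [hadef]; ring
  set S := Set.Icc (-a) a with hSdef
  have hhaS : -a ∈ S := Set.left_mem_Icc.2 haa.le
  have hhbS : a ∈ S := Set.right_mem_Icc.2 haa.le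
  have hGsurj : SurjOn G (Icc y x) (Icc 0 L) := by
    have := hGcont.surjOn_Icc (Set.left_mem_Icc.2 hyx.le) (Set.right_mem_Icc.2 hyx.le)
    rwa [hGy] at this
  set h : ℝ → ℝ := fun t => Function.invFunOn G (Icc y x) (t + a) with hhdef
  have hGmonoM := hGmono.monotoneOn
  have hinj : InjOn G (Icc y x) := hGmono.injOn
  have hkey : ∀ t ∈ S, h t ∈ Icc y x ∧ G (h t) = t + a := by
    intro t ht
    have hmem : t + a ∈ Icc 0 L := ⟨by linarith [ht.1], by linarith [ht.2]⟩
    obtain ⟨v, hv, hGv⟩ := hGsurj hmem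
    exact ⟨Function.invFunOn_mem ⟨v, hv, hGv⟩, Function.invFunOn_eq ⟨v, hv, hGv⟩⟩
  have hmaps : ∀ t ∈ S, h t ∈ Icc y x := fun t ht => (hkey t ht).1
  have hsurjh : ∀ v ∈ Icc y x, G v - a ∈ S ∧ h (G v - a) = v := by
    intro v hv
    have h0 : G v ∈ Icc 0 L := by
      constructor
      · rw [← hGy]; exact hGmonoM (Set.left_mem_Icc.2 hyx.le) hv hv.1
      · rw [hLdef]; exact hGmonoM hv (Set.right_mem_Icc.2 hyx.le) hv.2
    have ht : G v - a ∈ S := ⟨by linarith [h0.1], by linarith [h0.2]⟩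
    obtain ⟨hmem, heq⟩ := hkey _ ht
    rw [sub_add_cancel] at heq
    exact ⟨ht, hinj hmem hv heq⟩
  have hhy : h (-a) = y := by
    obtain ⟨hmem, heq⟩ := hkey (-a) hhaS
    apply hinj hmem (Set.left_mem_Icc.2 hyx.le)
    rw [heq, hGy]; ring
  have hhx : h a = x := by
    obtain ⟨hmem, heq⟩ := hkey a hhbS
    apply hinj hmem (Set.right_mem_Icc.2 hyx.le)
    rw [heq, ← hLdef, hL2]
  have hmonoh : StrictMonoOn h S := by
    intro s hs t ht hst
    obtain ⟨hm1, he1⟩ := hkey s hs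
    obtain ⟨hm2, he2⟩ := hkey t ht
    by_contra hle
    push_neg at hle
    have := hGmonoM hm2 hm1 hle
    rw [he1, he2] at this
    linarith
  have hcont : ContinuousOn h S := by
    intro t ht
    have hright : t < a → ContinuousWithinAt h (Ici t) t := by
      intro hta
      apply StrictMonoOn.continuousWithinAt_right_of_exists_between hmonoh
      · rw [mem_nhdsWithin]
        exact ⟨Iio a, isOpen_Iio, hta, fun u hu => ⟨ht.1.trans hu.2, hu.1.le⟩⟩
      · intro b hb
        have hhtx : h t < x := by
          rw [← hhx]; exact hmonoh ht hhbS hta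
        have hv1 : h t < min b x := lt_min hb hhtx
        have hv2 : min b x ∈ Icc y x := ⟨(hmaps t ht).1.trans hv1.le, min_le_right _ _⟩
        obtain ⟨htS', hveq⟩ := hsurjh _ hv2
        exact ⟨G (min b x) - a, htS', by rw [hveq]; exact ⟨hv1, min_le_left _ _⟩⟩
    have hleft : -a < t → ContinuousWithinAt h (Iic t) t := by
      intro hta
      apply StrictMonoOn.continuousWithinAt_left_of_exists_between hmonoh
      · rw [mem_nhdsWithin]
        exact ⟨Ioi (-a), isOpen_Ioi, hta, fun u hu => ⟨hu.1.le, hu.2.trans ht.2⟩⟩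
      · intro b hb
        have hhty : y < h t := by
          rw [← hhy]; exact hmonoh hhaS ht hta
        have hv1 : max b y < h t := max_lt hb hhty
        have hv2 : max b y ∈ Icc y x := ⟨le_max_right _ _, hv1.le.trans (hmaps t ht).2⟩
        obtain ⟨htS', hveq⟩ := hsurjh _ hv2
        exact ⟨G (max b y) - a, htS', by rw [hveq]; exact ⟨le_max_left _ _, hv1⟩⟩
    rcases eq_or_lt_of_le ht.1 with h1 | h1
    · exact (hright (by rw [← h1]; exact haa)).mono (fun u hu => h1 ▸ hu.1)
    rcases eq_or_lt_of_le ht.2 with h2 | h2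
    · exact (hleft h1).mono (fun u hu => h2 ▸ hu.2)
    · exact ((hleft h1).union (hright h2)).mono
        (fun u _ => (le_total u t).elim Or.inl Or.inr)
  have hDint : ∀ t ∈ Set.Ioo (-a) a, HasDerivAt h (Real.sqrt (z (h t))) t := by
    intro t ht
    have htS : t ∈ S := Set.Ioo_subset_Icc_self ht
    have hhtio : h t ∈ Set.Ioo y x :=
      ⟨by rw [← hhy]; exact hmonoh hhaS htS ht.1, by rw [← hhx]; exact hmonoh htS hhbS ht.2⟩
    have hzpos : 0 < z (h t) := hpos _ hhtio
    have hG' : HasDerivAt G (p (h t)) (h t) :=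
      intervalIntegral.integral_hasDerivAt_right
        (hsub y (h t) le_rfl hyx.le hhtio.1.le hhtio.2.le)
        ⟨Set.univ, Filter.univ_mem, hpmeas.aestronglyMeasurable.restrict⟩
        (ContinuousAt.inv₀ (Real.continuous_sqrt.comp hzc).continuousAt
          (ne_of_gt (Real.sqrt_pos.2 hzpos)))
    have hf : HasDerivAt (fun u => G u - a) (p (h t)) (h t) := hG'.sub_const a
    have hcat : ContinuousAt h t := (hcont t htS).continuousAt (Icc_mem_nhds ht.1 ht.2)
    have hev : ∀ᶠ u in nhds t, (fun u => G u - a) (h u) = u := by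
      filter_upwards [Ioo_mem_nhds ht.1 ht.2] with u hu
      have := (hkey u (Set.Ioo_subset_Icc_self hu)).2
      simp only [this]
      ring
    have hres := HasDerivAt.of_local_left_inverse hcat hf (ne_of_gt (hppos _ hhtio)) hev
    rwa [show (p (h t))⁻¹ = Real.sqrt (z (h t)) from inv_inv _] at hres
  -- left endpoint: derivative of h is 0
  have hsqrt3 : Real.sqrt 3 ≤ 2 := by
    rw [show (2:ℝ) = Real.sqrt 4 by
      rw [show (4:ℝ) = 2^2 by norm_num, Real.sqrt_sq (by norm_num : (0:ℝ) ≤ 2)]]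
    exact Real.sqrt_le_sqrt (by norm_num)
  have hDleft : HasDerivWithinAt h 0 S (-a) := by
    rw [hasDerivWithinAt_iff_tendsto_slope, Metric.tendsto_nhdsWithin_nhds]
    intro ε hε
    have hρ0 : 0 < min δl (ε^2/2) := lt_min hδl0 (by positivity)
    obtain ⟨δ, hδ0, hδ⟩ := Metric.continuousWithinAt_iff.mp (hcont (-a) hhaS) _ hρ0
    refine ⟨δ, hδ0, ?_⟩
    intro t htm hdist
    obtain ⟨htS, htne⟩ := htm
    have hta : -a < t := lt_of_le_of_ne htS.1 (Ne.symm htne)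
    have hs := hδ htS hdist
    rw [hhy, Real.dist_eq] at hs
    have hsy : y < h t := by rw [← hhy]; exact hmonoh hhaS htS hta
    have habs := (abs_lt.mp hs).2
    have hsδ : h t ≤ y + δl := by linarith [min_le_left δl (ε^2/2)]
    have hsx : h t ≤ x := (hmaps t htS).2
    have hts : G (h t) = t + a := (hkey t htS).2
    set w := Real.sqrt (h t - y) with hwdef
    have hw : 0 < w := Real.sqrt_pos.2 (by linarith)
    have hww : w * w = h t - y := Real.mul_self_sqrt (by linarith)
    have hGs_low : (Real.sqrt 3)⁻¹ * (2 * w) ≤ G (h t) := by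
      apply stmt10_G_lower hsy (by norm_num) (hsub y (h t) le_rfl hyx.le hsy.le hsx) hpy0
      intro u hu
      have hux : u < x := by linarith [hu.2]
      have hzb := (hδl u ⟨hu.1.le, by linarith [hu.2]⟩).2
      apply inv_anti₀ (Real.sqrt_pos.2 (hpos u ⟨hu.1, hux⟩))
      apply Real.sqrt_le_sqrt
      linarith [hzb]
    have h30 : (0:ℝ) < Real.sqrt 3 := Real.sqrt_pos.2 (by norm_num)
    have hGs_pos : 0 < G (h t) :=
      lt_of_lt_of_le (by positivity) hGs_low
    have hslope : slope h (-a) t = (h t - y) / G (h t) := by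
      rw [slope_def_field, hhy, sub_neg_eq_add, hts]
    have hkey2 : (h t - y) / G (h t) ≤ w := by
      rw [div_le_iff₀ hGs_pos]
      have h1 : (Real.sqrt 3)⁻¹ * (2 * w) * w ≤ G (h t) * w :=
        mul_le_mul_of_nonneg_right hGs_low hw.le
      have h2 : Real.sqrt 3 * ((Real.sqrt 3)⁻¹ * (2 * w) * w) = 2 * (h t - y) := by
        rw [show Real.sqrt 3 * ((Real.sqrt 3)⁻¹ * (2 * w) * w)
          = (Real.sqrt 3 * (Real.sqrt 3)⁻¹) * (2 * (w * w)) by ring,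
          mul_inv_cancel₀ (ne_of_gt h30), hww, one_mul]
      have h3 : 2 * (h t - y) ≤ Real.sqrt 3 * (G (h t) * w) := by
        rw [← h2]; exact mul_le_mul_of_nonneg_left h1 h30.le
      have h4 : Real.sqrt 3 * (G (h t) * w) ≤ 2 * (G (h t) * w) :=
        mul_le_mul_of_nonneg_right hsqrt3 (mul_nonneg hGs_pos.le hw.le)
      rw [mul_comm]
      linarith
    have hwε : w < ε := by
      have h1 : h t - y < ε^2/2 := by linarith [min_le_right δl (ε^2/2)]
      have h2 : w < Real.sqrt (ε^2/2) := by
        rw [hwdef]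
        exact Real.sqrt_lt_sqrt (by linarith) h1
      have h3 : Real.sqrt (ε^2/2) < Real.sqrt (ε^2) :=
        Real.sqrt_lt_sqrt (by positivity) (by nlinarith)
      rw [Real.sqrt_sq hε.le] at h3
      linarith
    rw [hslope, Real.dist_eq, sub_zero, abs_of_nonneg (div_nonneg (by linarith) hGs_pos.le)]
    linarith
  -- right endpoint: derivative of h is 0
  have hDright : HasDerivWithinAt h 0 S a := by
    rw [hasDerivWithinAt_iff_tendsto_slope, Metric.tendsto_nhdsWithin_nhds]
    intro ε hε
    have hρ0 : 0 < min δr (ε^2/2) := lt_min hδr0 (by positivity)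
    obtain ⟨δ, hδ0, hδ⟩ := Metric.continuousWithinAt_iff.mp (hcont a hhbS) _ hρ0
    refine ⟨δ, hδ0, ?_⟩
    intro t htm hdist
    obtain ⟨htS, htne⟩ := htm
    have hta : t < a := lt_of_le_of_ne htS.2 htne
    have hs := hδ htS hdist
    rw [hhx, Real.dist_eq] at hs
    have hsx : h t < x := by rw [← hhx]; exact hmonoh htS hhbS hta
    have habs := (abs_lt.mp hs).1
    have hsδ : x - δr ≤ h t := by linarith [min_le_left δr (ε^2/2)]
    have hsy : y < h t := by
      have : δr ≤ (x - y)/3 := hδrle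
      linarith
    have hts : G (h t) = t + a := (hkey t htS).2
    have hLG : L - G (h t) = ∫ u in (h t)..x, p u := by
      have := hGdiff (h t) x hsy.le hsx.le hyx.le le_rfl
      rw [← hLdef] at this
      linarith [this]
    set w := Real.sqrt (x - h t) with hwdef
    have hw : 0 < w := Real.sqrt_pos.2 (by linarith)
    have hww : w * w = x - h t := Real.mul_self_sqrt (by linarith)
    have hGs_low : (Real.sqrt 3)⁻¹ * (2 * w) ≤ L - G (h t) := by
      rw [hLG]
      apply stmt10_G_lower' hsx (by norm_num)
        (hsub (h t) x hsy.le hsx.le hyx.le le_rfl) hpx0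
      intro u hu
      have huy : y < u := lt_of_lt_of_le hsy hu.1
      have hzb := (hδr u ⟨by linarith [hu.1], hu.2.le⟩).2
      apply inv_anti₀ (Real.sqrt_pos.2 (hpos u ⟨huy, hu.2⟩))
      apply Real.sqrt_le_sqrt
      linarith [hzb]
    have h30 : (0:ℝ) < Real.sqrt 3 := Real.sqrt_pos.2 (by norm_num)
    have hGs_pos : 0 < L - G (h t) := lt_of_lt_of_le (by positivity) hGs_low
    have hslope : slope h a t = (x - h t) / (L - G (h t)) := by
      rw [slope_def_field, hhx, hts, hL2]
      rw [show a + a - (t + a) = -(t - a) by ring, div_neg, ← neg_div, neg_sub]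
    have hkey2 : (x - h t) / (L - G (h t)) ≤ w := by
      rw [div_le_iff₀ hGs_pos]
      have h1 : (Real.sqrt 3)⁻¹ * (2 * w) * w ≤ (L - G (h t)) * w :=
        mul_le_mul_of_nonneg_right hGs_low hw.le
      have h2 : Real.sqrt 3 * ((Real.sqrt 3)⁻¹ * (2 * w) * w) = 2 * (x - h t) := by
        rw [show Real.sqrt 3 * ((Real.sqrt 3)⁻¹ * (2 * w) * w)
          = (Real.sqrt 3 * (Real.sqrt 3)⁻¹) * (2 * (w * w)) by ring,
          mul_inv_cancel₀ (ne_of_gt h30), hww, one_mul]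
      have h3 : 2 * (x - h t) ≤ Real.sqrt 3 * ((L - G (h t)) * w) := by
        rw [← h2]; exact mul_le_mul_of_nonneg_left h1 h30.le
      have h4 : Real.sqrt 3 * ((L - G (h t)) * w) ≤ 2 * ((L - G (h t)) * w) :=
        mul_le_mul_of_nonneg_right hsqrt3 (mul_nonneg hGs_pos.le hw.le)
      rw [mul_comm]
      linarith
    have hwε : w < ε := by
      have h1 : x - h t < ε^2/2 := by linarith [min_le_right δr (ε^2/2)]
      have h2 : w < Real.sqrt (ε^2/2) := by
        rw [hwdef]
        exact Real.sqrt_lt_sqrt (by linarith) h1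
      have h3 : Real.sqrt (ε^2/2) < Real.sqrt (ε^2) :=
        Real.sqrt_lt_sqrt (by positivity) (by nlinarith)
      rw [Real.sqrt_sq hε.le] at h3
      linarith
    rw [hslope, Real.dist_eq, sub_zero, abs_of_nonneg (div_nonneg (by linarith) hGs_pos.le)]
    linarith
  -- derivative of sqrt ∘ z ∘ h at the left endpoint is 1
  have hφleft : HasDerivWithinAt (fun u => Real.sqrt (z (h u))) 1 S (-a) := by
    rw [hasDerivWithinAt_iff_tendsto_slope, Metric.tendsto_nhdsWithin_nhds]
    intro ε hε
    have hη0 : 0 < min ε 1 := lt_min hε one_pos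
    have hη1 : min ε 1 ≤ 1 := min_le_right _ _
    have hηε : min ε 1 ≤ ε := min_le_left _ _
    set η := min ε 1 with hηdef
    obtain ⟨δη, hδη0, hδηle, hδη⟩ := stmt10_near_left hz hzy hzy' hη0 hthird
    obtain ⟨δ, hδ0, hδ⟩ := Metric.continuousWithinAt_iff.mp (hcont (-a) hhaS) δη hδη0
    refine ⟨δ, hδ0, ?_⟩
    intro t htm hdist
    obtain ⟨htS, htne⟩ := htm
    have hta : -a < t := lt_of_le_of_ne htS.1 (Ne.symm htne)
    have hs := hδ htS hdist
    rw [hhy, Real.dist_eq] at hs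
    have hsy : y < h t := by rw [← hhy]; exact hmonoh hhaS htS hta
    have habs := (abs_lt.mp hs).2
    have hsδ : h t ≤ y + δη := by linarith
    have hsx : h t < x := by linarith
    have hts : G (h t) = t + a := (hkey t htS).2
    have hA0 : (0:ℝ) < 2 + η := by linarith
    have hB0 : (0:ℝ) < 2 - η := by linarith
    set A := Real.sqrt (2 + η) with hAdef
    set B := Real.sqrt (2 - η) with hBdef
    have hA : 0 < A := Real.sqrt_pos.2 hA0
    have hB : 0 < B := Real.sqrt_pos.2 hB0
    set w := Real.sqrt (h t - y) with hwdef
    have hw : 0 < w := Real.sqrt_pos.2 (by linarith)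
    have hww : w * w = h t - y := Real.mul_self_sqrt (by linarith)
    have hAA : A * A = 2 + η := Real.mul_self_sqrt hA0.le
    have hBB : B * B = 2 - η := Real.mul_self_sqrt hB0.le
    have hzs := hδη (h t) ⟨hsy.le, by linarith⟩
    have hsq_up : Real.sqrt (z (h t)) ≤ A * w := by
      rw [hAdef, hwdef, ← Real.sqrt_mul hA0.le]
      exact Real.sqrt_le_sqrt hzs.2
    have hsq_lo : B * w ≤ Real.sqrt (z (h t)) := by
      rw [hBdef, hwdef, ← Real.sqrt_mul hB0.le]
      exact Real.sqrt_le_sqrt hzs.1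
    have hint := hsub y (h t) le_rfl hyx.le hsy.le hsx.le
    have hGs_low : A⁻¹ * (2 * w) ≤ G (h t) := by
      apply stmt10_G_lower hsy hA0 hint hpy0
      intro u hu
      have hupos : 0 < z u := hpos u ⟨hu.1, by linarith [hu.2]⟩
      exact inv_anti₀ (Real.sqrt_pos.2 hupos)
        (Real.sqrt_le_sqrt (hδη u ⟨hu.1.le, by linarith [hu.2]⟩).2)
    have hGs_up : G (h t) ≤ B⁻¹ * (2 * w) := by
      apply stmt10_G_upper hsy hB0 hint hpy0
      intro u hu
      have h1 : 0 < Real.sqrt ((2 - η) * (u - y)) :=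
        Real.sqrt_pos.2 (mul_pos hB0 (by linarith [hu.1]))
      exact inv_anti₀ h1
        (Real.sqrt_le_sqrt (hδη u ⟨hu.1.le, by linarith [hu.2]⟩).1)
    have hGs_pos : 0 < G (h t) := lt_of_lt_of_le (by positivity) hGs_low
    have hslope : slope (fun u => Real.sqrt (z (h u))) (-a) t
        = Real.sqrt (z (h t)) / G (h t) := by
      rw [slope_def_field]
      simp only [hhy, hzy, Real.sqrt_zero, sub_zero, sub_neg_eq_add, hts]
    have hup : Real.sqrt (z (h t)) / G (h t) ≤ (2 + η) / 2 := by
      rw [div_le_div_iff₀ hGs_pos (by norm_num : (0:ℝ) < 2)]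
      have e1 : (2 + η) * (A⁻¹ * (2 * w)) = 2 * (A * w) := by
        rw [← hAA]
        field_simp
      have e2 : (2 + η) * (A⁻¹ * (2 * w)) ≤ (2 + η) * G (h t) :=
        mul_le_mul_of_nonneg_left hGs_low hA0.le
      linarith [hsq_up, e1, e2]
    have hlo : (2 - η) / 2 ≤ Real.sqrt (z (h t)) / G (h t) := by
      rw [div_le_div_iff₀ (by norm_num : (0:ℝ) < 2) hGs_pos]
      have e1 : (2 - η) * (B⁻¹ * (2 * w)) = 2 * (B * w) := by
        rw [← hBB]
        field_simp
      have e2 : (2 - η) * G (h t) ≤ (2 - η) * (B⁻¹ * (2 * w)) :=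
        mul_le_mul_of_nonneg_left hGs_up hB0.le
      linarith [hsq_lo, e1, e2]
    rw [hslope, Real.dist_eq]
    have : |Real.sqrt (z (h t)) / G (h t) - 1| ≤ η / 2 :=
      abs_le.mpr ⟨by linarith, by linarith⟩
    linarith
  -- derivative of sqrt ∘ z ∘ h at the right endpoint is -1
  have hφright : HasDerivWithinAt (fun u => Real.sqrt (z (h u))) (-1) S a := by
    rw [hasDerivWithinAt_iff_tendsto_slope, Metric.tendsto_nhdsWithin_nhds]
    intro ε hε
    have hη0 : 0 < min ε 1 := lt_min hε one_pos
    have hη1 : min ε 1 ≤ 1 := min_le_right _ _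
    have hηε : min ε 1 ≤ ε := min_le_left _ _
    set η := min ε 1 with hηdef
    obtain ⟨δη, hδη0, hδηle, hδη⟩ := stmt10_near_right hz hzx hzx' hη0 hthird
    obtain ⟨δ, hδ0, hδ⟩ := Metric.continuousWithinAt_iff.mp (hcont a hhbS) δη hδη0
    refine ⟨δ, hδ0, ?_⟩
    intro t htm hdist
    obtain ⟨htS, htne⟩ := htm
    have hta : t < a := lt_of_le_of_ne htS.2 htne
    have hs := hδ htS hdist
    rw [hhx, Real.dist_eq] at hs
    have hsx : h t < x := by rw [← hhx]; exact hmonoh htS hhbS hta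
    have habs := (abs_lt.mp hs).1
    have hsδ : x - δη ≤ h t := by linarith
    have hsy : y < h t := by linarith
    have hts : G (h t) = t + a := (hkey t htS).2
    have hLG : L - G (h t) = ∫ u in (h t)..x, p u := by
      have := hGdiff (h t) x hsy.le hsx.le hyx.le le_rfl
      rw [← hLdef] at this
      linarith [this]
    have hA0 : (0:ℝ) < 2 + η := by linarith
    have hB0 : (0:ℝ) < 2 - η := by linarith
    set A := Real.sqrt (2 + η) with hAdef
    set B := Real.sqrt (2 - η) with hBdef
    have hA : 0 < A := Real.sqrt_pos.2 hA0
    have hB : 0 < B := Real.sqrt_pos.2 hB0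
    set w := Real.sqrt (x - h t) with hwdef
    have hw : 0 < w := Real.sqrt_pos.2 (by linarith)
    have hww : w * w = x - h t := Real.mul_self_sqrt (by linarith)
    have hAA : A * A = 2 + η := Real.mul_self_sqrt hA0.le
    have hBB : B * B = 2 - η := Real.mul_self_sqrt hB0.le
    have hzs := hδη (h t) ⟨by linarith, hsx.le⟩
    have hsq_up : Real.sqrt (z (h t)) ≤ A * w := by
      rw [hAdef, hwdef, ← Real.sqrt_mul hA0.le]
      exact Real.sqrt_le_sqrt hzs.2
    have hsq_lo : B * w ≤ Real.sqrt (z (h t)) := by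
      rw [hBdef, hwdef, ← Real.sqrt_mul hB0.le]
      exact Real.sqrt_le_sqrt hzs.1
    have hint := hsub (h t) x hsy.le hsx.le hyx.le le_rfl
    have hGs_low : A⁻¹ * (2 * w) ≤ L - G (h t) := by
      rw [hLG]
      apply stmt10_G_lower' hsx hA0 hint hpx0
      intro u hu
      have hupos : 0 < z u := hpos u ⟨by linarith [hu.1], hu.2⟩
      exact inv_anti₀ (Real.sqrt_pos.2 hupos)
        (Real.sqrt_le_sqrt (hδη u ⟨by linarith [hu.1], hu.2.le⟩).2)
    have hGs_up : L - G (h t) ≤ B⁻¹ * (2 * w) := by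
      rw [hLG]
      apply stmt10_G_upper' hsx hB0 hint hpx0
      intro u hu
      have h1 : 0 < Real.sqrt ((2 - η) * (x - u)) :=
        Real.sqrt_pos.2 (mul_pos hB0 (by linarith [hu.2]))
      exact inv_anti₀ h1
        (Real.sqrt_le_sqrt (hδη u ⟨by linarith [hu.1], hu.2.le⟩).1)
    have hGs_pos : 0 < L - G (h t) := lt_of_lt_of_le (by positivity) hGs_low
    have hslope : slope (fun u => Real.sqrt (z (h u))) a t
        = -(Real.sqrt (z (h t)) / (L - G (h t))) := by
      rw [slope_def_field]
      simp only [hhx, hzx, Real.sqrt_zero, sub_zero]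
      rw [hts, hL2, show a + a - (t + a) = -(t - a) by ring, div_neg, neg_neg]
    have hup : Real.sqrt (z (h t)) / (L - G (h t)) ≤ (2 + η) / 2 := by
      rw [div_le_div_iff₀ hGs_pos (by norm_num : (0:ℝ) < 2)]
      have e1 : (2 + η) * (A⁻¹ * (2 * w)) = 2 * (A * w) := by
        rw [← hAA]
        field_simp
      have e2 : (2 + η) * (A⁻¹ * (2 * w)) ≤ (2 + η) * (L - G (h t)) :=
        mul_le_mul_of_nonneg_left hGs_low hA0.le
      linarith [hsq_up, e1, e2]
    have hlo : (2 - η) / 2 ≤ Real.sqrt (z (h t)) / (L - G (h t)) := by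
      rw [div_le_div_iff₀ (by norm_num : (0:ℝ) < 2) hGs_pos]
      have e1 : (2 - η) * (B⁻¹ * (2 * w)) = 2 * (B * w) := by
        rw [← hBB]
        field_simp
      have e2 : (2 - η) * (L - G (h t)) ≤ (2 - η) * (B⁻¹ * (2 * w)) :=
        mul_le_mul_of_nonneg_left hGs_up hB0.le
      linarith [hsq_lo, e1, e2]
    rw [hslope, Real.dist_eq]
    have : |-(Real.sqrt (z (h t)) / (L - G (h t))) - -1| ≤ η / 2 := by
      rw [show -(Real.sqrt (z (h t)) / (L - G (h t))) - -1
        = -(Real.sqrt (z (h t)) / (L - G (h t)) - 1) by ring, abs_neg]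
      exact abs_le.mpr ⟨by linarith, by linarith⟩
    linarith
  have hD : ∀ t ∈ S, HasDerivWithinAt h (Real.sqrt (z (h t))) S t := by
    intro t ht
    rcases eq_or_lt_of_le ht.1 with h1 | h1
    · have hz0 : Real.sqrt (z (h t)) = 0 := by
        rw [← h1, hhy, hzy, Real.sqrt_zero]
      rw [hz0, ← h1]
      exact hDleft
    rcases eq_or_lt_of_le ht.2 with h2 | h2
    · have hz0 : Real.sqrt (z (h t)) = 0 := by
        rw [h2, hhx, hzx, Real.sqrt_zero]
      rw [hz0, h2]
      exact hDright
    · exact (hDint t ⟨h1, h2⟩).hasDerivWithinAt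
  have hUD : UniqueDiffOn ℝ S := uniqueDiffOn_Icc haa
  have hdw : ∀ t ∈ S, derivWithin h S t = Real.sqrt (z (h t)) :=
    fun t ht => (hD t ht).derivWithin (hUD t ht)
  have hEq : Set.EqOn (fun u => derivWithin h S u) (fun u => Real.sqrt (z (h u))) S := hdw
  have hφdiffInt : ∀ t ∈ Set.Ioo (-a) a,
      DifferentiableAt ℝ (fun u => Real.sqrt (z (h u))) t := by
    intro t ht
    have htS : t ∈ S := Set.Ioo_subset_Icc_self ht
    have hhtio : h t ∈ Set.Ioo y x :=
      ⟨by rw [← hhy]; exact hmonoh hhaS htS ht.1,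
       by rw [← hhx]; exact hmonoh htS hhbS ht.2⟩
    have hzpos : 0 < z (h t) := hpos _ hhtio
    have h1 : HasDerivAt (fun s => Real.sqrt (z s))
        (1 / (2 * Real.sqrt (z (h t))) * deriv z (h t)) (h t) :=
      (Real.hasDerivAt_sqrt (ne_of_gt hzpos)).comp (h t)
        ((hz.differentiable two_ne_zero) (h t)).hasDerivAt
    have h2 := (h1.comp t (hDint t ht)).differentiableAt
    simpa [Function.comp_def] using h2
  refine ⟨a, ha, h, hmonoh, hhy, hhx, hD, ?_, ?_, ?_, ?_⟩
  · exact ((Real.continuous_sqrt.comp_continuousOn (hzc.comp_continuousOn hcont))).congr hEq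
  · intro t ht
    rcases eq_or_lt_of_le ht.1 with h1 | h1
    · rw [← h1]
      exact (hφleft.differentiableWithinAt).congr (fun u hu => hdw u hu) (hdw _ hhaS)
    rcases eq_or_lt_of_le ht.2 with h2 | h2
    · rw [h2]
      exact (hφright.differentiableWithinAt).congr (fun u hu => hdw u hu) (hdw _ hhbS)
    · exact ((hφdiffInt t ⟨h1, h2⟩).differentiableWithinAt).congr
        (fun u hu => hdw u hu) (hdw t ht)
  · rw [derivWithin_congr hEq (hdw _ hhaS)]
    exact hφleft.derivWithin (hUD _ hhaS)
  · rw [derivWithin_congr hEq (hdw _ hhbS)]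
    exact hφright.derivWithin (hUD _ hhbS)
end

section
/- Let s > 0, let ε ∈ {0, 1}, and let x ∈ (0, 1). Define P : ℝ → ℝ by P(t) = (1/(x(15 − 5x² − 11x⁴ + x⁶))) · (t² − x²) · ( s·(−15 + 10x² − 3x⁴ + t²(10 + 12x² − 6x⁴) + t⁴(−3 − 6x² + x⁴)) + 4εx·(x²(−5 + x²) − t⁴(3 + x²) + t²(5 + 2x² + x⁴)) ). Then P(t) > 0 for all t ∈ (−x, x). -/
/-- Positivity of the factorized polynomial (3.14) on `(−x, x)` for
`x ∈ (0, 1)`, `s > 0` and `ε ∈ {0, 1}`. -/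
theorem stmt_11 (s e x : ℝ) (hs : 0 < s) (he : e = 0 ∨ e = 1)
    (hx1 : 0 < x) (hx2 : x < 1) (P : ℝ → ℝ)
    (hP : P = fun t : ℝ =>
      (1 / (x * (15 - 5 * x ^ 2 - 11 * x ^ 4 + x ^ 6))) *
        ((t ^ 2 - x ^ 2) *
          (s * (-15 + 10 * x ^ 2 - 3 * x ^ 4
              + t ^ 2 * (10 + 12 * x ^ 2 - 6 * x ^ 4)
              + t ^ 4 * (-3 - 6 * x ^ 2 + x ^ 4))
            + 4 * e * x * (x ^ 2 * (-5 + x ^ 2) - t ^ 4 * (3 + x ^ 2)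
              + t ^ 2 * (5 + 2 * x ^ 2 + x ^ 4))))) :
    ∀ t ∈ Set.Ioo (-x) x, 0 < P t := by
  subst hP
  rintro t ⟨ht1, ht2⟩
  have ht : t ^ 2 < x ^ 2 := by nlinarith
  have ht0 : (0:ℝ) ≤ t ^ 2 := sq_nonneg t
  have hv1 : x ^ 2 < 1 := by nlinarith
  have hD : 0 < x * (15 - 5 * x ^ 2 - 11 * x ^ 4 + x ^ 6) := by
    have ha : (0:ℝ) < 1 - x ^ 2 := by nlinarith
    have hb : (0:ℝ) < 15 + 10 * x ^ 2 - x ^ 4 := by nlinarith [sq_nonneg (x ^ 2 - 1)]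
    nlinarith [mul_pos ha hb]
  -- A < 0
  have hA : (-15 + 10 * x ^ 2 - 3 * x ^ 4
      + t ^ 2 * (10 + 12 * x ^ 2 - 6 * x ^ 4)
      + t ^ 4 * (-3 - 6 * x ^ 2 + x ^ 4)) < 0 := by
    have h1 : 0 < (x ^ 2 - t ^ 2) *
        ((10 + 12 * x ^ 2 - 6 * x ^ 4) - (3 + 6 * x ^ 2 - x ^ 4) * (x ^ 2 + t ^ 2)) := by
      have hb : 0 < (10 + 12 * x ^ 2 - 6 * x ^ 4) - (3 + 6 * x ^ 2 - x ^ 4) * (x ^ 2 + t ^ 2) := by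
        nlinarith [mul_pos (show (0:ℝ) < 1 - x ^ 2 by nlinarith)
          (show (0:ℝ) < 5 + 8 * x ^ 2 - x ^ 4 by nlinarith [sq_nonneg x]),
          mul_nonneg (mul_pos hx1 hx1).le (show (0:ℝ) ≤ x ^ 2 - t ^ 2 by nlinarith),
          sq_nonneg x]
      exact mul_pos (by nlinarith) hb
    have h2 : (0:ℝ) < (1 - x ^ 2) ^ 2 * (15 + 10 * x ^ 2 - x ^ 4) := by
      apply mul_pos (pow_pos (show (0:ℝ) < 1 - x ^ 2 by nlinarith) 2)
      nlinarith [sq_nonneg (x ^ 2 - 1)]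
    nlinarith [h1, h2]
  -- B ≤ 0
  have hB : (x ^ 2 * (-5 + x ^ 2) - t ^ 4 * (3 + x ^ 2)
      + t ^ 2 * (5 + 2 * x ^ 2 + x ^ 4)) < 0 := by
    have h1 : 0 < (x ^ 2 - t ^ 2) * ((5 - x ^ 2) - (3 + x ^ 2) * t ^ 2) := by
      apply mul_pos (by nlinarith)
      nlinarith
    nlinarith
  have hBr : (s * (-15 + 10 * x ^ 2 - 3 * x ^ 4
      + t ^ 2 * (10 + 12 * x ^ 2 - 6 * x ^ 4)
      + t ^ 4 * (-3 - 6 * x ^ 2 + x ^ 4))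
      + 4 * e * x * (x ^ 2 * (-5 + x ^ 2) - t ^ 4 * (3 + x ^ 2)
        + t ^ 2 * (5 + 2 * x ^ 2 + x ^ 4))) < 0 := by
    rcases he with rfl | rfl
    · simpa using mul_neg_of_pos_of_neg hs hA
    · have := mul_neg_of_pos_of_neg hs hA
      nlinarith [mul_neg_of_pos_of_neg hx1 hB]
  simp only
  apply mul_pos
  · exact one_div_pos.mpr hD
  · exact mul_pos_of_neg_of_neg (by nlinarith) hBr
end

section
/- Let s, ε, E ∈ ℝ and let x ∈ ℝ satisfy x ≠ 0, x² ≠ 1 and 15 + 10x² − x⁴ ≠ 0. Then there exists a unique pair (D, C) ∈ ℝ × ℝ such that −4εx² − (D/5)x⁶ + (D − C/3)x⁴ + (2C − 3D)x² − 4ε + C − D + Ex = 0 and −8εx − (6D/5)x⁵ + 4(D − C/3)x³ + 2(2C − 3D)x + E = −2s(1 − x²). -/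
/-- Unique solvability of the linear system (3.11a)–(3.11b) in `(D, C)`. -/
theorem stmt_12 (s e E x : ℝ) (hx0 : x ≠ 0) (hx1 : x ^ 2 ≠ 1)
    (hx2 : 15 + 10 * x ^ 2 - x ^ 4 ≠ 0) :
    ∃! DC : ℝ × ℝ,
      (-4 * e * x ^ 2 - (DC.1 / 5) * x ^ 6 + (DC.1 - DC.2 / 3) * x ^ 4
          + (2 * DC.2 - 3 * DC.1) * x ^ 2 - 4 * e + DC.2 - DC.1 + E * x = 0) ∧
      (-8 * e * x - (6 * DC.1 / 5) * x ^ 5 + 4 * (DC.1 - DC.2 / 3) * x ^ 3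
          + 2 * (2 * DC.2 - 3 * DC.1) * x + E = -2 * s * (1 - x ^ 2)) := by
  have hx1' : 1 - x ^ 2 ≠ 0 := fun h => hx1 (by linarith [h] )
  set det : ℝ := (2/15) * x * (1 - x ^ 2) ^ 2 * (15 + 10 * x ^ 2 - x ^ 4) with hdetdef
  have hdet : det ≠ 0 := by
    simp only [hdetdef]
    apply mul_ne_zero
    apply mul_ne_zero
    apply mul_ne_zero
    · norm_num
    · exact hx0
    · exact pow_ne_zero 2 hx1'
    · exact hx2
  -- coefficients
  set c1 : ℝ := -4 * e * x ^ 2 - 4 * e + E * x with hc1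
  set c2 : ℝ := -8 * e * x + E + 2 * s * (1 - x ^ 2) with hc2
  set b1 : ℝ := -x ^ 4 / 3 + 2 * x ^ 2 + 1 with hb1
  set b2 : ℝ := -4 * x ^ 3 / 3 + 4 * x with hb2
  set a1 : ℝ := -x ^ 6 / 5 + x ^ 4 - 3 * x ^ 2 - 1 with ha1
  set a2 : ℝ := -6 * x ^ 5 / 5 + 4 * x ^ 3 - 6 * x with ha2
  refine ⟨⟨(b1 * c2 - b2 * c1) / det, (a2 * c1 - a1 * c2) / det⟩, ⟨?_, ?_⟩, ?_⟩
  · field_simp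
    ring
  · field_simp
    ring
  · rintro ⟨D, C⟩ ⟨h1, h2⟩
    have hD : det * D = b1 * c2 - b2 * c1 := by
      simp only [hdetdef, hc1, hc2, hb1, hb2]
      linear_combination (-4 * x ^ 3 / 3 + 4 * x) * h1 - (-x ^ 4 / 3 + 2 * x ^ 2 + 1) * h2
    have hC : det * C = a2 * c1 - a1 * c2 := by
      simp only [hdetdef, hc1, hc2, ha1, ha2]
      linear_combination (-x ^ 6 / 5 + x ^ 4 - 3 * x ^ 2 - 1) * h2 - (-6 * x ^ 5 / 5 + 4 * x ^ 3 - 6 * x) * h1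
    have hDe : D = (b1 * c2 - b2 * c1) / det := by
      rw [eq_div_iff hdet]; linear_combination hD
    have hCe : C = (a2 * c1 - a1 * c2) / det := by
      rw [eq_div_iff hdet]; linear_combination hC
    rw [Prod.mk.injEq]
    exact ⟨hDe, hCe⟩
end

section
/- Let η be the unique real root of the cubic ξ³ + 5ξ² + 75ξ + 59, let ε ∈ {−1, 1}, and let x ∈ ℝ be such that either ε = 1 and η < x < 1, or ε = −1 and x > 1. Define, for t ≠ −1, z_x(t) = ε(t − 1)(t − x)(t³ + (2 + x)t² + (5 + 6x)t + 8 + 13x + 4x²) / ((1 + t)(x − 1)(1 + x)(4 + x)). Then z_x(x) = 0, z_x(1) = 0, z_x'(x) = 2ε, z_x'(1) = −2ε, and z_x(t) > 0 for all t strictly between x and 1. -/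
/-- In the region where the resultant cofactor is nonpositive, `C > 0` directly. -/
lemma aux_cofactor_region (x t : ℝ) (hx1 : -1 < x) (ht1 : x ≤ t) (ht2 : t ≤ 1)
    (hS : 0 < x^3+5*x^2+75*x+59)
    (ha : (3*x^2-42*x-33)*t + 2*x^3+21*x^2+72*x+49 ≤ 0) :
    0 < t^3+(2+x)*t^2+(5+6*x)*t+8+13*x+4*x^2 := by
  have hx3 : -83/100 < x := by nlinarith [sq_nonneg (x + 417/200), sq_nonneg x]
  nlinarith [mul_nonneg (by linarith : (0:ℝ) ≤ t - x) (by linarith : (0:ℝ) ≤ 1 - t),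
    sq_nonneg (t-x), sq_nonneg (x+1), mul_pos hS (by linarith : (0:ℝ) < 1-t+1),
    mul_nonneg (mul_nonneg (by linarith : (0:ℝ) ≤ t - x) (by linarith : (0:ℝ) ≤ 1 - t)) (by linarith : (0:ℝ) ≤ x+1)]

/-- Positivity of the cubic factor `C` on `[x,1]` when `η < x < 1`. -/
lemma aux_C_pos (x : ℝ) (hx1 : -1 < x) (hx2 : x < 1)
    (hS : 0 < x^3+5*x^2+75*x+59) :
    ∀ t ∈ Set.Icc x 1, 0 < t^3+(2+x)*t^2+(5+6*x)*t+8+13*x+4*x^2 := by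
  set C : ℝ → ℝ := fun t => t^3+(2+x)*t^2+(5+6*x)*t+8+13*x+4*x^2 with hC
  have hcont : ContinuousOn C (Set.Icc x 1) := by fun_prop
  obtain ⟨u, humem, humin⟩ := (isCompact_Icc).exists_isMinOn ⟨x, Set.left_mem_Icc.2 hx2.le⟩ hcont
  have hCu : 0 < C u := by
    rcases eq_or_lt_of_le humem.1 with h | hxu
    · have he : C u = 2*(x+1)^2*(x+4) := by rw [hC, ← h]; ring
      rw [he]
      exact mul_pos (mul_pos two_pos (pow_pos (by linarith) 2)) (by linarith)
    rcases eq_or_lt_of_le humem.2 with h | hu1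
    · have he : C u = 4*(x+1)*(x+4) := by rw [hC, h]; ring
      rw [he]
      exact mul_pos (mul_pos four_pos (by linarith)) (by linarith)
    -- interior minimum: derivative vanishes
    have hloc : IsLocalMin C u := humin.isLocalMin (Icc_mem_nhds hxu hu1)
    have hd : HasDerivAt C (3*u^2+2*(2+x)*u+(5+6*x)) u := by
      have h := (((hasDerivAt_pow 3 u).add ((hasDerivAt_pow 2 u).const_mul ((2:ℝ)+x))).add
        ((hasDerivAt_id' u).const_mul ((5:ℝ)+6*x))).add_const (8+13*x+4*x^2)
      have h2' : HasDerivAt C ((3:ℕ)*u^(3-1) + ((2:ℝ)+x)*((2:ℕ)*u^(2-1)) + ((5:ℝ)+6*x)*1) u := by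
        exact h.congr_of_eventuallyEq (Filter.Eventually.of_forall fun y => by simp only [hC, Pi.add_apply]; ring)
      convert h2' using 1
      push_cast; ring
    have hcrit : 3*u^2+2*(2+x)*u+(5+6*x) = 0 := by
      have := hloc.deriv_eq_zero
      rwa [hd.deriv] at this
    -- resultant identity at the critical point
    have hkey : ((3*x^2-42*x-33)*u + 2*x^3+21*x^2+72*x+49) * C u
        = 8*(x+1)^2*(x^3+5*x^2+75*x+59) := by
      rw [hC]
      linear_combination (((2*x^2-28*x-22)*u^2 + (2*x^3+6*x^2+22*x+18)*u
        + (18*x^3-52*x^2-94*x-32))/2) * hcrit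
    by_cases ha : (3*x^2-42*x-33)*u + 2*x^3+21*x^2+72*x+49 ≤ 0
    · exact aux_cofactor_region x u hx1 humem.1 humem.2 hS ha
    · push_neg at ha
      by_contra hc
      push_neg at hc
      have h1 : ((3*x^2-42*x-33)*u + 2*x^3+21*x^2+72*x+49) * C u ≤ 0 :=
        mul_nonpos_of_nonneg_of_nonpos ha.le hc
      have h2 : 0 < 8*(x+1)^2*(x^3+5*x^2+75*x+59) :=
        mul_pos (mul_pos (by norm_num) (pow_pos (by linarith) 2)) hS
      rw [hkey] at h1; linarith
  intro t ht
  exact lt_of_lt_of_le hCu (humin ht)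

lemma aux_deriv_pt (e x p : ℝ) (hden : ((1 + p) * (x - 1) * (1 + x) * (4 + x)) ≠ 0) :
    deriv (fun t : ℝ =>
      e * (t - 1) * (t - x) *
          (t ^ 3 + (2 + x) * t ^ 2 + (5 + 6 * x) * t + 8 + 13 * x + 4 * x ^ 2)
        / ((1 + t) * (x - 1) * (1 + x) * (4 + x))) p
    = (((e * 1 * (p - x) + e * (p - 1) * 1) *
        (p ^ 3 + (2 + x) * p ^ 2 + (5 + 6 * x) * p + 8 + 13 * x + 4 * x ^ 2)
       + e * (p - 1) * (p - x) * (3 * p ^ 2 + 2 * (2 + x) * p + (5 + 6 * x)))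
        * ((1 + p) * (x - 1) * (1 + x) * (4 + x))
      - (e * (p - 1) * (p - x) *
          (p ^ 3 + (2 + x) * p ^ 2 + (5 + 6 * x) * p + 8 + 13 * x + 4 * x ^ 2))
        * ((x - 1) * (1 + x) * (4 + x)))
        / ((1 + p) * (x - 1) * (1 + x) * (4 + x)) ^ 2 := by
  have hnum : HasDerivAt (fun t : ℝ =>
      e * (t - 1) * (t - x) *
        (t ^ 3 + (2 + x) * t ^ 2 + (5 + 6 * x) * t + 8 + 13 * x + 4 * x ^ 2))
      ((e * 1 * (p - x) + e * (p - 1) * 1) *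
        (p ^ 3 + (2 + x) * p ^ 2 + (5 + 6 * x) * p + 8 + 13 * x + 4 * x ^ 2)
       + e * (p - 1) * (p - x) * (3 * p ^ 2 + 2 * (2 + x) * p + (5 + 6 * x))) p := by
    have hf : HasDerivAt (fun t : ℝ => e * (t - 1) * (t - x))
        (e * 1 * (p - x) + e * (p - 1) * 1) p := by
      have ha : HasDerivAt (fun t : ℝ => e * (t - 1)) (e * 1) p :=
        ((hasDerivAt_id' p).sub_const 1).const_mul e
      have hb : HasDerivAt (fun t : ℝ => t - x) 1 p := (hasDerivAt_id' p).sub_const x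
      exact ha.mul hb
    have hg : HasDerivAt (fun t : ℝ =>
        t ^ 3 + (2 + x) * t ^ 2 + (5 + 6 * x) * t + 8 + 13 * x + 4 * x ^ 2)
        (3 * p ^ 2 + 2 * (2 + x) * p + (5 + 6 * x)) p := by
      have h := (((hasDerivAt_pow 3 p).add ((hasDerivAt_pow 2 p).const_mul ((2:ℝ)+x))).add
        ((hasDerivAt_id' p).const_mul ((5:ℝ)+6*x))).add_const (8+13*x+4*x^2)
      have h2' : HasDerivAt (fun t : ℝ =>
          t ^ 3 + (2 + x) * t ^ 2 + (5 + 6 * x) * t + 8 + 13 * x + 4 * x ^ 2)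
          ((3:ℕ)*p^(3-1) + ((2:ℝ)+x)*((2:ℕ)*p^(2-1)) + ((5:ℝ)+6*x)*1) p := by
        exact h.congr_of_eventuallyEq (Filter.Eventually.of_forall fun y => by simp only [Pi.add_apply]; ring)
      convert h2' using 1
      push_cast; ring
    exact hf.mul hg
  have hdenf : HasDerivAt (fun t : ℝ => (1 + t) * (x - 1) * (1 + x) * (4 + x))
      ((x - 1) * (1 + x) * (4 + x)) p := by
    have h0 : HasDerivAt (fun t : ℝ => (1 + t)) 1 p := (hasDerivAt_id' p).const_add 1
    simpa using ((h0.mul_const (x-1)).mul_const (1+x)).mul_const (4+x)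
  have H := hnum.div hdenf hden
  exact H.deriv

/-- Key computation of Theorem 4: for `x ∈ (η, 1)` with `ε = 1`, or `x > 1`
with `ε = −1`, the profile function `z_x` vanishes at `x` and `1` with
derivatives `2ε` and `−2ε` there, and is positive strictly between `x`
and `1`. -/
theorem stmt_13 (η : ℝ)
    (hη : η ^ 3 + 5 * η ^ 2 + 75 * η + 59 = 0)
    (hηuniq : ∀ ξ : ℝ, ξ ^ 3 + 5 * ξ ^ 2 + 75 * ξ + 59 = 0 → ξ = η)
    (e x : ℝ)
    (hcase : (e = 1 ∧ η < x ∧ x < 1) ∨ (e = -1 ∧ 1 < x))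
    (zx : ℝ → ℝ)
    (hzx : zx = fun t : ℝ =>
      e * (t - 1) * (t - x) *
          (t ^ 3 + (2 + x) * t ^ 2 + (5 + 6 * x) * t + 8 + 13 * x + 4 * x ^ 2)
        / ((1 + t) * (x - 1) * (1 + x) * (4 + x))) :
    zx x = 0 ∧ zx 1 = 0 ∧ deriv zx x = 2 * e ∧ deriv zx 1 = -2 * e ∧
    ∀ t ∈ Set.Ioo (min x 1) (max x 1), 0 < zx t := by
  have hηgt : (-1:ℝ) < η := by nlinarith [sq_nonneg (η+2), sq_nonneg η]
  have hx1 : -1 < x := by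
    rcases hcase with ⟨_, hx, _⟩ | ⟨_, hx⟩ <;> linarith
  have hxne1 : x - 1 ≠ 0 := by
    rcases hcase with ⟨_, _, hx⟩ | ⟨_, hx⟩
    · exact sub_ne_zero.2 (ne_of_lt hx)
    · exact sub_ne_zero.2 (ne_of_gt hx)
  have hx1pos : (0:ℝ) < 1 + x := by linarith
  have hx4pos : (0:ℝ) < 4 + x := by linarith
  have hdenx : ((1 + x) * (x - 1) * (1 + x) * (4 + x)) ≠ 0 :=
    mul_ne_zero (mul_ne_zero (mul_ne_zero (ne_of_gt hx1pos) hxne1) (ne_of_gt hx1pos))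
      (ne_of_gt hx4pos)
  have hden1 : ((1 + (1:ℝ)) * (x - 1) * (1 + x) * (4 + x)) ≠ 0 :=
    mul_ne_zero (mul_ne_zero (mul_ne_zero (by norm_num) hxne1) (ne_of_gt hx1pos))
      (ne_of_gt hx4pos)
  refine ⟨?_, ?_, ?_, ?_, ?_⟩
  · rw [hzx]; simp
  · rw [hzx]; simp
  · rw [hzx, aux_deriv_pt e x x hdenx]
    field_simp
    ring
  · rw [hzx, aux_deriv_pt e x 1 hden1]
    field_simp
    ring
  · intro t ht
    rcases hcase with ⟨he, hex, hx2⟩ | ⟨he, hx2⟩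
    · rw [min_eq_left hx2.le, max_eq_right hx2.le] at ht
      obtain ⟨htx, ht1⟩ := ht
      have hS : 0 < x^3+5*x^2+75*x+59 := by
        have h := mul_pos (show (0:ℝ) < x - η by linarith)
          (show (0:ℝ) < (x+η+5)^2+x^2+η^2+125 by positivity)
        nlinarith [h]
      have hCpos := aux_C_pos x hx1 hx2 hS t ⟨htx.le, ht1.le⟩
      rw [hzx]
      have hnum : e * (t - 1) * (t - x) *
          (t ^ 3 + (2 + x) * t ^ 2 + (5 + 6 * x) * t + 8 + 13 * x + 4 * x ^ 2) < 0 := by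
        rw [he]
        have h1 : (1:ℝ) * (t - 1) * (t - x) < 0 :=
          mul_neg_of_neg_of_pos (by nlinarith) (by linarith)
        exact mul_neg_of_neg_of_pos h1 hCpos
      have hden : ((1 + t) * (x - 1) * (1 + x) * (4 + x)) < 0 := by
        have h1 : (1 + t) * (x - 1) < 0 :=
          mul_neg_of_pos_of_neg (by linarith) (by linarith)
        have h2 : (1 + t) * (x - 1) * (1 + x) < 0 := mul_neg_of_neg_of_pos h1 hx1pos
        exact mul_neg_of_neg_of_pos h2 hx4pos
      exact div_pos_of_neg_of_neg hnum hden
    · rw [min_eq_right hx2.le, max_eq_left hx2.le] at ht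
      obtain ⟨ht1, htx⟩ := ht
      have hCpos : 0 < t ^ 3 + (2 + x) * t ^ 2 + (5 + 6 * x) * t + 8 + 13 * x + 4 * x ^ 2 := by
        nlinarith [pow_pos (show (0:ℝ) < t by linarith) 3, sq_nonneg t]
      rw [hzx]
      have hnum : 0 < e * (t - 1) * (t - x) *
          (t ^ 3 + (2 + x) * t ^ 2 + (5 + 6 * x) * t + 8 + 13 * x + 4 * x ^ 2) := by
        rw [he]
        have h1 : 0 < (-1:ℝ) * (t - 1) * (t - x) := by nlinarith
        exact mul_pos h1 hCpos
      have hden : 0 < ((1 + t) * (x - 1) * (1 + x) * (4 + x)) := by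
        have h1 : 0 < (1 + t) * (x - 1) := mul_pos (by linarith) (by linarith)
        exact mul_pos (mul_pos h1 hx1pos) hx4pos
      exact div_pos hnum hden
end
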